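/- arXiv:1803.01590 — 4 statements merged into one kernel-verified Lean document; each statement's English description precedes it below -/
import Mathlib

section
/- For every positive integer n, the polynomial identity [n+1]_q · Σ_{T ∈ SYT(2×n)} q^{amaj(T)} = [2n choose n]_q holds in ℤ[q]. -/
open Polynomial

/-- The q-integer `[n]_q = 1 + q + ⋯ + q^(n-1)` in `ℤ[q]`. -/
noncomputable def qInt (n : ℕ) : Polynomial ℤ := ∑ i ∈ Finset.range n, X ^ i

/-- The Gaussian binomial coefficient `[a choose b]_q` in `ℤ[q]`, defined by the
standard q-Pascal recurrence `[n+1 choose k+1] = [n choose k] + q^(k+1) [n choose k+1]`. -/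
noncomputable def qBinom : ℕ → ℕ → Polynomial ℤ
  | _, 0 => 1
  | 0, _ + 1 => 0
  | n + 1, k + 1 => qBinom n k + X ^ (k + 1) * qBinom n (k + 1)

@[simp] lemma qBinom_zero_right (n : ℕ) : qBinom n 0 = 1 := by
  cases n <;> rfl

@[simp] lemma qBinom_zero_succ (k : ℕ) : qBinom 0 (k+1) = 0 := rfl

lemma qBinom_pascal (n k : ℕ) :
    qBinom (n+1) (k+1) = qBinom n k + X ^ (k + 1) * qBinom n (k + 1) := rfl

lemma qBinom_eq_zero {n k : ℕ} (h : n < k) : qBinom n k = 0 := by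
  induction n generalizing k with
  | zero => obtain ⟨k, rfl⟩ := Nat.exists_eq_add_of_lt h; simp [Nat.add_comm]
  | succ n ih =>
    obtain ⟨k, rfl⟩ : ∃ m, k = m + 1 := ⟨k - 1, by omega⟩
    rw [qBinom_pascal, ih (by omega), ih (by omega)]
    ring

@[simp] lemma qBinom_self (n : ℕ) : qBinom n n = 1 := by
  induction n with
  | zero => rfl
  | succ n ih => rw [qBinom_pascal, ih, qBinom_eq_zero (by omega)]; ring

/-- K1 statement -/
def K1 (m : ℕ) : Prop := ∀ k : ℕ,
  (X ^ (k+1) - 1) * qBinom (m+1) (k+1) = (X ^ (m+1) - 1) * qBinom m k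

/-- K2 statement -/
def K2 (m : ℕ) : Prop := ∀ k : ℕ, k ≤ m →
  (X ^ (m - k) - 1) * qBinom m k = (X ^ m - 1) * qBinom (m - 1) k

lemma K2_zero : K2 0 := by
  intro k hk
  interval_cases k
  simp

lemma K1_zero : K1 0 := by
  intro k
  rcases k with _ | k
  · simp [qBinom_pascal]
  · rw [qBinom_pascal, qBinom_eq_zero (n := 0) (k := k+1) (by omega),
      qBinom_eq_zero (n := 0) (k := k+1+1) (by omega)]
    ring

lemma K2_succ {m : ℕ} (h2 : K2 m) (h1 : K1 (m - 1)) : K2 (m + 1) := by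
  intro k hk
  rcases k with _ | k
  · simp
  · -- k+1 ≥ 1
    rw [qBinom_pascal]
    rcases m with _ | m
    · -- m = 0, k = 0
      have hk0 : k = 0 := by omega
      subst hk0
      norm_num [qBinom_pascal, qBinom_eq_zero (n := 0) (k := 1) (by omega)]
    · -- m = m+1 ≥ 1; use key1 (m) at k : (X^(k+1)-1) qBinom (m+1) (k+1) = (X^(m+1)-1) qBinom m k
      have e1 := h1 k   -- h1 : K1 m  (since (m+1)-1 = m)
      simp only [Nat.add_sub_cancel] at h1
      have e1 := h1 k
      have e2 := h2 k (by omega)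
      simp only [Nat.add_sub_cancel] at e2
      -- goal : (X^(m+2-(k+1)) - 1) * (qBinom (m+1) k + X^(k+1) * qBinom (m+1) (k+1))
      --      = (X^(m+2) - 1) * qBinom (m+1) (k+1)
      have en : m + 1 + 1 - (k + 1) = m + 1 - k := by omega
      have en2 : m + 1 + 1 - 1 = m + 1 := by omega
      rw [en, en2]
      -- linear combination: goal = e2 + (X^(m+2)-X^(k+1)) stuff
      -- (X^(m+1-k)-1) * qBinom (m+1) k = (X^(m+1)-1) * qBinom m k  (e2)
      -- (X^(k+1)-1) * qBinom (m+1) (k+1) = (X^(m+1)-1) * qBinom m k  (e1)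
      -- want: (X^(m+1-k)-1) * (qBinom (m+1) k + X^(k+1) * qBinom (m+1) (k+1))
      --     = (X^(m+2)-1) * qBinom (m+1) (k+1)
      have ex : (X : Polynomial ℤ) ^ (m+1-k) * X ^ (k+1) = X ^ (m+2) := by
        rw [← pow_add]; congr 1; omega
      linear_combination e2 - e1 + qBinom (m+1) (k+1) * ex

lemma K1_succ {m : ℕ} (h1 : K1 m) (h2 : K2 (m + 1)) : K1 (m + 1) := by
  intro k
  rw [qBinom_pascal]
  by_cases hk : k ≤ m + 1
  · have e1 := h1 k
    have e2 := h2 k hk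
    simp only [Nat.add_sub_cancel] at e2
    have ex : (X : Polynomial ℤ) ^ (m + 1 - k) * X ^ (k+1) = X ^ (m+2) := by
      rw [← pow_add]; congr 1; omega
    linear_combination X ^ (k+1) * e1 - X ^ (k+1) * e2 + qBinom (m+1) k * ex
  · rw [qBinom_eq_zero (show m + 1 < k by omega), qBinom_eq_zero (show m + 1 < k + 1 by omega)]
    ring

lemma K12 (m : ℕ) : K1 m ∧ K2 m ∧ K2 (m + 1) := by
  induction m with
  | zero => exact ⟨K1_zero, K2_zero, K2_succ K2_zero K1_zero⟩
  | succ m ih =>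
    have h2 : K2 (m + 2) := K2_succ (m := m + 1) ih.2.2 (by simpa using ih.1)
    exact ⟨K1_succ ih.1 ih.2.2, ih.2.2, h2⟩

lemma key1 (m k : ℕ) :
    (X ^ (k+1) - 1) * qBinom (m+1) (k+1) = (X ^ (m+1) - 1) * qBinom m k :=
  (K12 m).1 k

lemma key2 (m k : ℕ) (h : k ≤ m) :
    (X ^ (m - k) - 1) * qBinom m k = (X ^ m - 1) * qBinom (m - 1) k :=
  (K12 m).2.1 k h

lemma X_pow_sub_one_ne_zero (k : ℕ) : ((X : Polynomial ℤ) ^ (k + 1) - 1) ≠ 0 := by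
  intro h
  have := congrArg (eval 0) h
  simp [Polynomial.eval_pow] at this

/-- special symmetry case: qBinom (2k+1) (k+1) = qBinom (2k+1) k -/
lemma qBinom_symm_special (k : ℕ) : qBinom (2*k+1) (k+1) = qBinom (2*k+1) k := by
  apply mul_left_cancel₀ (X_pow_sub_one_ne_zero k)
  have h1 := key1 (2*k) k
  have h2 := key2 (2*k+1) k (by omega)
  have e : 2*k+1-k = k+1 := by omega
  have e2 : 2*k+1-1 = 2*k := by omega
  rw [e, e2] at h2
  have e3 : 2*k+1 = 2*k+1 := rfl
  rw [h1, ← h2]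

/-- the "star" identity -/
lemma qBinom_star (m k : ℕ) :
    qBinom (m+2) (k+1)
      = qBinom (m+1) (k+1) + qBinom (m+1) k + (X ^ (m+1) - 1) * qBinom m k := by
  have h := key1 m k
  have p := qBinom_pascal (m+1) k
  linear_combination p + h

/-- final algebraic identity -/
lemma final_alg (n : ℕ) :
    qInt (n+2) * (qBinom (2*(n+1)) (n+1) - X * qBinom (2*(n+1)) n)
      = qBinom (2*(n+1)) (n+1) := by
  have hX : (X - 1 : Polynomial ℤ) ≠ 0 := by
    have := X_pow_sub_one_ne_zero 0
    simpa using this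
  apply mul_right_cancel₀ hX
  have hg : qInt (n+2) * (X - 1) = X ^ (n+2) - 1 := geom_sum_mul X (n+2)
  have h1 := key1 (2*n+1) n
  have h2 := key2 (2*n+2) n (by omega)
  have e : 2*n+2-n = n+2 := by omega
  have e2 : 2*n+2-1 = 2*n+1 := by omega
  rw [e, e2] at h2
  have e3 : 2*(n+1) = 2*n+2 := by ring
  rw [e3]
  have e4 : 2*n+1+1 = 2*n+2 := rfl
  rw [e4] at h1
  -- (X^(n+1)-1) * qBinom (2n+2) (n+1) = (X^(n+2)-1) * qBinom (2n+2) n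
  have key : (X ^ (n+1) - 1) * qBinom (2*n+2) (n+1) = (X ^ (n+2) - 1) * qBinom (2*n+2) n := by
    rw [h1, h2]
  -- goal : qInt (n+2) * (A - X * B) * (X-1) = A * (X-1)
  linear_combination (qBinom (2*n+2) (n+1) - X * qBinom (2*n+2) n) * hg + X * key

open Polynomial Finset

/-- major index of the binary word of length m whose 1-positions are S -/
def majS (m : ℕ) (S : Finset ℕ) : ℕ := ∑ i ∈ S.filter (fun i => i + 1 ∉ S ∧ i < m), i

/-- ballot condition -/
def Ballot (m : ℕ) (S : Finset ℕ) : Prop := ∀ j ≤ m, 2 * (S.filter (fun i => i ≤ j)).card ≤ j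

instance (m : ℕ) (S : Finset ℕ) : Decidable (Ballot m S) := by unfold Ballot; infer_instance

/-- The set of words: subsets of [1,m] of size k -/
def W (m k : ℕ) : Finset (Finset ℕ) := (Finset.Icc 1 m).powersetCard k

def DY (m k : ℕ) : Finset (Finset ℕ) := (W m k).filter (Ballot m)

noncomputable def F (m k : ℕ) : Polynomial ℤ := ∑ S ∈ W m k, X ^ majS m S
noncomputable def FA (m k : ℕ) : Polynomial ℤ :=
  ∑ S ∈ (W m k).filter (fun S => m ∈ S), X ^ majS m S
noncomputable def DG (m k : ℕ) : Polynomial ℤ := ∑ S ∈ DY m k, X ^ majS m S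
noncomputable def DGA (m k : ℕ) : Polynomial ℤ :=
  ∑ S ∈ (DY m k).filter (fun S => m ∈ S), X ^ majS m S

lemma Icc_succ (m : ℕ) : Finset.Icc 1 (m+1) = insert (m+1) (Finset.Icc 1 m) := by
  ext x; simp [Finset.mem_Icc, Finset.mem_insert]; omega

lemma mem_W {m k : ℕ} {S : Finset ℕ} : S ∈ W m k ↔ S ⊆ Finset.Icc 1 m ∧ S.card = k := by
  simp [W, Finset.mem_powersetCard]

lemma notMem_of_subset {m : ℕ} {S : Finset ℕ} (hS : S ⊆ Finset.Icc 1 m) : m + 1 ∉ S := by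
  intro h; have := (Finset.mem_Icc.1 (hS h)).2; omega

/-- maj of insert (m+1) -/
lemma majS_insert {m : ℕ} {S : Finset ℕ} (hS : S ⊆ Finset.Icc 1 m) :
    majS (m+1) (insert (m+1) S) = majS m S := by
  unfold majS
  have hm1 : m + 1 ∉ S := notMem_of_subset hS
  have hset : (insert (m+1) S).filter (fun i => i + 1 ∉ insert (m+1) S ∧ i < m+1)
      = S.filter (fun i => i + 1 ∉ S ∧ i < m) := by
    ext x
    simp only [Finset.mem_filter, Finset.mem_insert]
    constructor
    · rintro ⟨hx | hx, h2, h3⟩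
      · omega
      · have hxm : x ≤ m := by have := hS hx; simp [Finset.mem_Icc] at this; omega
        push_neg at h2
        refine ⟨hx, h2.2, ?_⟩
        omega
    · rintro ⟨hx, h2, h3⟩
      refine ⟨Or.inr hx, ?_, by omega⟩
      push_neg
      exact ⟨by omega, h2⟩
  rw [hset]

/-- maj unchanged if m ∉ S -/
lemma majS_notmem {m : ℕ} {S : Finset ℕ} (hS : S ⊆ Finset.Icc 1 m) (hm : m ∉ S) :
    majS (m+1) S = majS m S := by
  unfold majS
  congr 1
  ext x
  simp only [Finset.mem_filter]
  constructor
  · rintro ⟨hx, h2, h3⟩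
    have hxm : x ≤ m := by have := hS hx; simp [Finset.mem_Icc] at this; omega
    refine ⟨hx, h2, ?_⟩
    rcases Nat.lt_or_ge x m with h | h
    · exact h
    · exact absurd (by omega : x = m) (fun e => hm (e ▸ hx))
  · rintro ⟨hx, h2, h3⟩; exact ⟨hx, h2, by omega⟩

/-- maj gains m if m ∈ S -/
lemma majS_mem {m : ℕ} {S : Finset ℕ} (hS : S ⊆ Finset.Icc 1 m) (hm : m ∈ S) :
    majS (m+1) S = majS m S + m := by
  unfold majS
  have hm1 : m + 1 ∉ S := notMem_of_subset hS
  have hset : S.filter (fun i => i + 1 ∉ S ∧ i < m+1)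
      = insert m (S.filter (fun i => i + 1 ∉ S ∧ i < m)) := by
    ext x
    simp only [Finset.mem_filter, Finset.mem_insert]
    constructor
    · rintro ⟨hx, h2, h3⟩
      have hxm : x ≤ m := by have := hS hx; simp [Finset.mem_Icc] at this; omega
      rcases Nat.lt_or_ge x m with h | h
      · exact Or.inr ⟨hx, h2, h⟩
      · exact Or.inl (by omega)
    · rintro (rfl | ⟨hx, h2, h3⟩)
      · exact ⟨hm, hm1, by omega⟩
      · exact ⟨hx, h2, by omega⟩
  rw [hset, Finset.sum_insert (by simp)]
  omega

lemma W_zero (m : ℕ) : W m 0 = {∅} := by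
  simp [W]

lemma W_zero_succ (k : ℕ) : W 0 (k+1) = ∅ := by
  rw [Finset.eq_empty_iff_forall_notMem]
  intro S hS
  obtain ⟨h1, h2⟩ := mem_W.1 hS
  have he : S = ∅ := Finset.subset_empty.1 (by simpa using h1)
  rw [he] at h2
  simp at h2

@[simp] lemma majS_empty (m : ℕ) : majS m ∅ = 0 := by simp [majS]

@[simp] lemma F_zero (m : ℕ) : F m 0 = 1 := by simp [F, W_zero]

lemma W_split (m k : ℕ) :
    W (m+1) (k+1) = W m (k+1) ∪ (W m k).image (insert (m+1)) := by
  unfold W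
  rw [Icc_succ, Finset.powersetCard_succ_insert (by simp)]

lemma sum_W_split (m k : ℕ) (f : Finset ℕ → Polynomial ℤ) :
    ∑ S ∈ W (m+1) (k+1), f S
      = (∑ S ∈ W m (k+1), f S) + ∑ S ∈ W m k, f (insert (m+1) S) := by
  rw [W_split, Finset.sum_union, Finset.sum_image]
  · intro x hx y hy hxy
    have hx' := notMem_of_subset (mem_W.1 hx).1
    have hy' := notMem_of_subset (mem_W.1 hy).1
    have := congrArg (fun s => Finset.erase s (m+1)) hxy
    simpa [Finset.erase_insert hx', Finset.erase_insert hy'] using this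
  · rw [Finset.disjoint_left]
    intro S hS hS2
    obtain ⟨t, ht, rfl⟩ := Finset.mem_image.1 hS2
    exact notMem_of_subset (mem_W.1 hS).1 (Finset.mem_insert_self _ _)

lemma FA_add (m k : ℕ) :
    FA m k + ∑ S ∈ (W m k).filter (fun S => ¬ m ∈ S), X ^ majS m S = F m k :=
  Finset.sum_filter_add_sum_filter_not _ _ _

lemma F_succ (m k : ℕ) :
    F (m+1) (k+1) = X ^ m * FA m (k+1) + (F m (k+1) - FA m (k+1)) + F m k := by
  unfold F
  rw [sum_W_split]
  have h2 : ∑ S ∈ W m k, (X : Polynomial ℤ) ^ majS (m+1) (insert (m+1) S) = F m k := by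
    apply Finset.sum_congr rfl
    intro S hS
    rw [majS_insert (mem_W.1 hS).1]
  have h1 : ∑ S ∈ W m (k+1), (X : Polynomial ℤ) ^ majS (m+1) S
      = X ^ m * FA m (k+1) + (F m (k+1) - FA m (k+1)) := by
    rw [← Finset.sum_filter_add_sum_filter_not (W m (k+1)) (fun S => m ∈ S)]
    congr 1
    · rw [FA, Finset.mul_sum]
      apply Finset.sum_congr rfl
      intro S hS
      simp only [Finset.mem_filter] at hS
      rw [majS_mem (mem_W.1 hS.1).1 hS.2, pow_add]
      ring
    · have hc : ∀ S ∈ (W m (k+1)).filter (fun S => ¬ m ∈ S),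
          (X : Polynomial ℤ) ^ majS (m+1) S = X ^ majS m S := by
        intro S hS
        simp only [Finset.mem_filter] at hS
        rw [majS_notmem (mem_W.1 hS.1).1 hS.2]
      rw [Finset.sum_congr rfl hc, eq_sub_iff_add_eq, add_comm, FA_add]
  rw [h1, h2]
  rfl

lemma filter_W_mem (m k : ℕ) :
    (W (m+1) (k+1)).filter (fun S => m+1 ∈ S) = (W m k).image (insert (m+1)) := by
  ext S
  simp only [Finset.mem_filter, Finset.mem_image]
  constructor
  · rintro ⟨hS, hm⟩
    obtain ⟨h1, h2⟩ := mem_W.1 hS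
    refine ⟨S.erase (m+1), mem_W.2 ⟨?_, ?_⟩, by rw [Finset.insert_erase hm]⟩
    · intro x hx
      obtain ⟨hne, hxS⟩ := Finset.mem_erase.1 hx
      have := Finset.mem_Icc.1 (h1 hxS)
      exact Finset.mem_Icc.2 ⟨this.1, by omega⟩
    · rw [Finset.card_erase_of_mem hm, h2]
      omega
  · rintro ⟨t, ht, rfl⟩
    obtain ⟨h1, h2⟩ := mem_W.1 ht
    have hm1 := notMem_of_subset h1
    refine ⟨mem_W.2 ⟨?_, ?_⟩, Finset.mem_insert_self _ _⟩
    · intro x hx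
      rcases Finset.mem_insert.1 hx with rfl | hx
      · exact Finset.mem_Icc.2 ⟨by omega, le_refl _⟩
      · have := Finset.mem_Icc.1 (h1 hx)
        exact Finset.mem_Icc.2 ⟨this.1, by omega⟩
    · rw [Finset.card_insert_of_notMem hm1, h2]

lemma FA_succ (m k : ℕ) : FA (m+1) (k+1) = F m k := by
  unfold FA
  rw [filter_W_mem, Finset.sum_image]
  · apply Finset.sum_congr rfl
    intro S hS
    rw [majS_insert (mem_W.1 hS).1]
  · intro x hx y hy hxy
    have hx' := notMem_of_subset (mem_W.1 hx).1
    have hy' := notMem_of_subset (mem_W.1 hy).1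
    have := congrArg (fun s => Finset.erase s (m+1)) hxy
    simpa [Finset.erase_insert hx', Finset.erase_insert hy'] using this

lemma F_zero_succ (k : ℕ) : F 0 (k+1) = 0 := by
  simp [F, W_zero_succ]

lemma FA_zero (k : ℕ) : FA 0 k = 0 := by
  rcases k with _ | k
  · simp [FA, W_zero, Finset.filter_singleton]
  · simp [FA, W_zero_succ]

theorem F_eq (m : ℕ) : ∀ k, F m k = qBinom m k := by
  induction m using Nat.strong_induction_on with
  | _ m ih =>
    intro k
    rcases k with _ | k
    · simp
    rcases m with _ | m
    · rw [F_zero_succ, qBinom_zero_succ]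
    rcases m with _ | m
    · -- m = 1
      rw [F_succ, FA_zero, F_zero_succ, qBinom_pascal, qBinom_zero_succ]
      rcases k with _ | k
      · simp
      · rw [F_zero_succ, qBinom_zero_succ]
        ring
    · -- m = m+2
      rw [F_succ, FA_succ, ih (m+1) (by omega) (k+1), ih (m+1) (by omega) k,
        ih m (by omega) k]
      linear_combination -qBinom_star m k

lemma filter_le_self {m : ℕ} {S : Finset ℕ} (hS : S ⊆ Finset.Icc 1 m) :
    S.filter (fun i => i ≤ m) = S := by
  apply Finset.filter_true_of_mem
  intro x hx
  exact (Finset.mem_Icc.1 (hS hx)).2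

lemma ballot_card {m k : ℕ} {S : Finset ℕ} (hS : S ∈ W m k) (hb : Ballot m S) :
    2 * k ≤ m := by
  have := hb m le_rfl
  rw [filter_le_self (mem_W.1 hS).1, (mem_W.1 hS).2] at this
  exact this

lemma DY_empty {m k : ℕ} (h : m < 2*k) : DY m k = ∅ := by
  rw [Finset.eq_empty_iff_forall_notMem]
  intro S hS
  obtain ⟨h1, h2⟩ := Finset.mem_filter.1 hS
  exact absurd (ballot_card h1 h2) (by omega)

lemma DG_empty {m k : ℕ} (h : m < 2*k) : DG m k = 0 := by
  simp [DG, DY_empty h]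

lemma DGA_empty {m k : ℕ} (h : m < 2*k) : DGA m k = 0 := by
  simp [DGA, DY_empty h]

lemma Ballot_succ_iff {m : ℕ} {S : Finset ℕ} (hS : S ⊆ Finset.Icc 1 m) :
    Ballot (m+1) S ↔ Ballot m S := by
  constructor
  · intro hb j hj
    exact hb j (by omega)
  · intro hb j hj
    rcases Nat.lt_or_ge j (m+1) with h | h
    · exact hb j (by omega)
    · have hj1 : j = m + 1 := by omega
      subst hj1
      have h1 : S.filter (fun i => i ≤ m + 1) = S := by
        apply Finset.filter_true_of_mem
        intro x hx
        have := (Finset.mem_Icc.1 (hS hx)).2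
        omega
      have h2 := hb m le_rfl
      rw [filter_le_self hS] at h2
      rw [h1]
      omega

lemma Ballot_insert_iff {m k : ℕ} {S : Finset ℕ} (hS : S ∈ W m k) :
    Ballot (m+1) (insert (m+1) S) ↔ (Ballot m S ∧ 2*(k+1) ≤ m+1) := by
  obtain ⟨h1, h2⟩ := mem_W.1 hS
  have hm1 : m + 1 ∉ S := notMem_of_subset h1
  have hfilt : ∀ j ≤ m, (insert (m+1) S).filter (fun i => i ≤ j) = S.filter (fun i => i ≤ j) := by
    intro j hj
    rw [Finset.filter_insert, if_neg (by omega)]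
  have hfull : (insert (m+1) S).filter (fun i => i ≤ m+1) = insert (m+1) S := by
    apply Finset.filter_true_of_mem
    intro x hx
    rcases Finset.mem_insert.1 hx with rfl | hx
    · omega
    · have := (Finset.mem_Icc.1 (h1 hx)).2; omega
  have hcard : (insert (m+1) S).card = k + 1 := by
    rw [Finset.card_insert_of_notMem hm1, h2]
  constructor
  · intro hb
    constructor
    · intro j hj
      have := hb j (by omega)
      rwa [hfilt j hj] at this
    · have := hb (m+1) le_rfl
      rwa [hfull, hcard] at this
  · rintro ⟨hb, hk⟩ j hj
    rcases Nat.lt_or_ge j (m+1) with h | h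
    · rw [hfilt j (by omega)]
      exact hb j (by omega)
    · have hj1 : j = m + 1 := by omega
      subst hj1
      rw [hfull, hcard]
      omega

lemma DY_split (m k : ℕ) (h : 2*(k+1) ≤ m+1) :
    DY (m+1) (k+1) = DY m (k+1) ∪ (DY m k).image (insert (m+1)) := by
  unfold DY
  rw [W_split, Finset.filter_union]
  congr 1
  · apply Finset.filter_congr
    intro S hS
    simp only [Ballot_succ_iff (mem_W.1 hS).1]
  · ext S
    simp only [Finset.mem_filter, Finset.mem_image]
    constructor
    · rintro ⟨⟨t, ht, rfl⟩, hb⟩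
      exact ⟨t, ⟨ht, ((Ballot_insert_iff ht).1 hb).1⟩, rfl⟩
    · rintro ⟨t, ⟨ht, hbt⟩, rfl⟩
      exact ⟨⟨t, ht, rfl⟩, (Ballot_insert_iff ht).2 ⟨hbt, h⟩⟩

lemma mem_DY_W {m k : ℕ} {S : Finset ℕ} (hS : S ∈ DY m k) : S ∈ W m k :=
  (Finset.mem_filter.1 hS).1

lemma DG_zero (m : ℕ) : DG m 0 = 1 := by
  have hb : Ballot m ∅ := by intro j hj; simp
  simp [DG, DY, W_zero, Finset.filter_singleton, hb]

lemma DGA_add (m k : ℕ) :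
    DGA m k + ∑ S ∈ (DY m k).filter (fun S => ¬ m ∈ S), X ^ majS m S = DG m k :=
  Finset.sum_filter_add_sum_filter_not _ _ _

lemma DG_succ (m k : ℕ) (h : 2*(k+1) ≤ m+1) :
    DG (m+1) (k+1) = X ^ m * DGA m (k+1) + (DG m (k+1) - DGA m (k+1)) + DG m k := by
  unfold DG
  rw [DY_split m k h, Finset.sum_union, Finset.sum_image]
  · have h2 : ∑ S ∈ DY m k, (X : Polynomial ℤ) ^ majS (m+1) (insert (m+1) S) = DG m k := by
      apply Finset.sum_congr rfl
      intro S hS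
      rw [majS_insert (mem_W.1 (mem_DY_W hS)).1]
    have h1 : ∑ S ∈ DY m (k+1), (X : Polynomial ℤ) ^ majS (m+1) S
        = X ^ m * DGA m (k+1) + (DG m (k+1) - DGA m (k+1)) := by
      rw [← Finset.sum_filter_add_sum_filter_not (DY m (k+1)) (fun S => m ∈ S)]
      congr 1
      · rw [DGA, Finset.mul_sum]
        apply Finset.sum_congr rfl
        intro S hS
        simp only [Finset.mem_filter] at hS
        rw [majS_mem (mem_W.1 (mem_DY_W hS.1)).1 hS.2, pow_add]
        ring
      · have hc : ∀ S ∈ (DY m (k+1)).filter (fun S => ¬ m ∈ S),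
            (X : Polynomial ℤ) ^ majS (m+1) S = X ^ majS m S := by
          intro S hS
          simp only [Finset.mem_filter] at hS
          rw [majS_notmem (mem_W.1 (mem_DY_W hS.1)).1 hS.2]
        rw [Finset.sum_congr rfl hc, eq_sub_iff_add_eq, add_comm, DGA_add]
    rw [h1, h2]
    rfl
  · intro x hx y hy hxy
    have hx' := notMem_of_subset (mem_W.1 (mem_DY_W hx)).1
    have hy' := notMem_of_subset (mem_W.1 (mem_DY_W hy)).1
    have := congrArg (fun s => Finset.erase s (m+1)) hxy
    simpa [Finset.erase_insert hx', Finset.erase_insert hy'] using this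
  · rw [Finset.disjoint_left]
    intro S hS hS2
    obtain ⟨t, ht, rfl⟩ := Finset.mem_image.1 hS2
    exact notMem_of_subset (mem_W.1 (mem_DY_W hS)).1 (Finset.mem_insert_self _ _)

lemma DGA_succ (m k : ℕ) (h : 2*(k+1) ≤ m+1) : DGA (m+1) (k+1) = DG m k := by
  unfold DGA
  have hset : (DY (m+1) (k+1)).filter (fun S => m+1 ∈ S) = (DY m k).image (insert (m+1)) := by
    rw [DY_split m k h, Finset.filter_union]
    have e1 : (DY m (k+1)).filter (fun S => m+1 ∈ S) = ∅ := by
      rw [Finset.eq_empty_iff_forall_notMem]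
      intro S hS
      obtain ⟨h1, h2⟩ := Finset.mem_filter.1 hS
      exact notMem_of_subset (mem_W.1 (mem_DY_W h1)).1 h2
    have e2 : ((DY m k).image (insert (m+1))).filter (fun S => m+1 ∈ S)
        = (DY m k).image (insert (m+1)) := by
      apply Finset.filter_true_of_mem
      intro S hS
      obtain ⟨t, ht, rfl⟩ := Finset.mem_image.1 hS
      exact Finset.mem_insert_self _ _
    rw [e1, e2, Finset.empty_union]
  rw [hset, Finset.sum_image]
  · apply Finset.sum_congr rfl
    intro S hS
    rw [majS_insert (mem_W.1 (mem_DY_W hS)).1]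
  · intro x hx y hy hxy
    have hx' := notMem_of_subset (mem_W.1 (mem_DY_W hx)).1
    have hy' := notMem_of_subset (mem_W.1 (mem_DY_W hy)).1
    have := congrArg (fun s => Finset.erase s (m+1)) hxy
    simpa [Finset.erase_insert hx', Finset.erase_insert hy'] using this

noncomputable def qD : ℕ → ℕ → Polynomial ℤ
  | _, 0 => 1
  | m, k+1 => qBinom m (k+1) - X * qBinom m k

@[simp] lemma qD_zero (m : ℕ) : qD m 0 = 1 := rfl

lemma qD_succ (m k : ℕ) : qD m (k+1) = qBinom m (k+1) - X * qBinom m k := rfl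

lemma qD_star (m k : ℕ) :
    qD (m+2) (k+1) = (X ^ (m+1) - 1) * qD m k + qD (m+1) (k+1) + qD (m+1) k := by
  rcases k with _ | k
  · have hst := qBinom_star m 0
    simp only [qBinom_zero_right] at hst
    rw [qD_succ, qD_succ, qD_zero, qD_zero]
    simp only [qBinom_zero_right]
    linear_combination hst
  · rw [qD_succ, qD_succ, qD_succ, qD_succ]
    linear_combination qBinom_star m (k+1) - X * qBinom_star m k

lemma qD_parity (k : ℕ) : qD (2*k+2) (k+1) = qD (2*k+1) k := by
  rcases k with _ | k
  · rw [qD_succ, qD_zero]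
    norm_num [qBinom_pascal]
  · rw [qD_succ, qD_succ]
    have p1 := qBinom_pascal (2*(k+1)+1) (k+1)
    have p2 := qBinom_pascal (2*(k+1)+1) k
    have hs := qBinom_symm_special (k+1)
    have e1 : 2*(k+1)+2 = 2*(k+1)+1+1 := by ring
    have e2 : 2*(k+1)+1 = 2*(k+1)+1 := rfl
    rw [e1]
    linear_combination p1 - X * p2 + X^(k+2) * hs

theorem DG_eq (m : ℕ) : ∀ k, 2*k ≤ m → DG m k = qD m k := by
  induction m using Nat.strong_induction_on with
  | _ m ih =>
    intro k hk
    rcases k with _ | k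
    · rw [DG_zero, qD_zero]
    rcases m with _ | m
    · omega
    rcases Nat.lt_or_ge m (2*(k+1)) with hpar | hle
    · -- boundary: m+1 = 2(k+1), i.e. m = 2k+1
      have hm : m = 2*k+1 := by omega
      rw [DG_succ m k (by omega), DG_empty (by omega), DGA_empty (by omega),
        ih m (by omega) k (by omega)]
      subst hm
      have := qD_parity k
      rw [show 2*k+1+1 = 2*k+2 by ring]
      linear_combination -this
    · -- main case: 2(k+1) ≤ m
      rcases m with _ | m
      · omega
      rw [DG_succ (m+1) k (by omega), DGA_succ m k (by omega),
        ih (m+1) (by omega) (k+1) (by omega), ih (m+1) (by omega) k (by omega),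
        ih m (by omega) k (by omega)]
      linear_combination -qD_star m k

lemma DG_final (n : ℕ) :
    DG (2*(n+1)) (n+1) = qBinom (2*(n+1)) (n+1) - X * qBinom (2*(n+1)) n := by
  rw [DG_eq (2*(n+1)) (n+1) le_rfl, qD_succ]

theorem main_sum (n : ℕ) :
    qInt (n+2) * DG (2*(n+1)) (n+1) = qBinom (2*(n+1)) (n+1) := by
  rw [DG_final]
  exact final_alg n

/-- Amajor index: sum of all `i` such that `i` appears in row 2 and `i+1` appears in row 1. -/
def amaj {n : ℕ} (T : (Fin n → ℕ) × (Fin n → ℕ)) : ℕ :=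
  ∑ i ∈ (Finset.image T.2 Finset.univ).filter (fun i => ∃ j, T.1 j = i + 1), i

/-- Standard Young tableaux of shape 2×n: rows and columns strictly increasing,
entry set exactly `{1, …, 2n}` (each value appearing exactly once). -/
def SYT (n : ℕ) : Set ((Fin n → ℕ) × (Fin n → ℕ)) :=
  {T | StrictMono T.1 ∧ StrictMono T.2 ∧ (∀ i, T.1 i < T.2 i) ∧
    Set.range T.1 ∪ Set.range T.2 = Set.Icc 1 (2 * n)}

lemma DY_card {n : ℕ} {S : Finset ℕ} (hS : S ∈ DY (2*n) n) : S.card = n :=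
  (mem_W.1 (mem_DY_W hS)).2

lemma DY_subset {n : ℕ} {S : Finset ℕ} (hS : S ∈ DY (2*n) n) : S ⊆ Finset.Icc 1 (2*n) :=
  (mem_W.1 (mem_DY_W hS)).1

lemma compl_card {n : ℕ} {S : Finset ℕ} (hS : S ∈ DY (2*n) n) :
    (Finset.Icc 1 (2*n) \ S).card = n := by
  rw [Finset.card_sdiff_of_subset (DY_subset hS), Nat.card_Icc, DY_card hS]
  omega

noncomputable def toT (n : ℕ) (S : Finset ℕ) (hS : S ∈ DY (2*n) n) :
    (Fin n → ℕ) × (Fin n → ℕ) :=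
  (fun i => (Finset.Icc 1 (2*n) \ S).orderEmbOfFin (compl_card hS) i,
   fun i => S.orderEmbOfFin (DY_card hS) i)

lemma col_lt {n : ℕ} {S : Finset ℕ} (hS : S ∈ DY (2*n) n) (i : Fin n) :
    (Finset.Icc 1 (2*n) \ S).orderEmbOfFin (compl_card hS) i
      < S.orderEmbOfFin (DY_card hS) i := by
  set C := Finset.Icc 1 (2*n) \ S with hC
  set a := C.orderEmbOfFin (compl_card hS) with ha
  set b := S.orderEmbOfFin (DY_card hS) with hb
  set j := b i with hj
  have hjS : j ∈ S := Finset.orderEmbOfFin_mem S (DY_card hS) i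
  obtain ⟨hj1, hj2⟩ := Finset.mem_Icc.1 (DY_subset hS hjS)
  -- i+1 ≤ card of S-elements ≤ j
  have himg : Finset.image b (Finset.Iic i) ⊆ S.filter (fun x => x ≤ j) := by
    intro x hx
    obtain ⟨l, hl, rfl⟩ := Finset.mem_image.1 hx
    exact Finset.mem_filter.2 ⟨Finset.orderEmbOfFin_mem S (DY_card hS) l,
      b.monotone (Finset.mem_Iic.1 hl)⟩
  have hcard2 : (i : ℕ) + 1 ≤ (S.filter (fun x => x ≤ j)).card := by
    calc (i : ℕ) + 1 = (Finset.Iic i).card := (Fin.card_Iic i).symm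
    _ = (Finset.image b (Finset.Iic i)).card :=
        (Finset.card_image_of_injective _ b.injective).symm
    _ ≤ _ := Finset.card_le_card himg
  have hbal := (Finset.mem_filter.1 hS).2 j hj2
  -- card of C-elements ≤ j
  have hsub : S.filter (fun x => x ≤ j) ⊆ Finset.Icc 1 j := by
    intro x hx
    obtain ⟨hx1, hx2⟩ := Finset.mem_filter.1 hx
    exact Finset.mem_Icc.2 ⟨(Finset.mem_Icc.1 (DY_subset hS hx1)).1, hx2⟩
  have hfC : C.filter (fun x => x ≤ j) = Finset.Icc 1 j \ S.filter (fun x => x ≤ j) := by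
    ext x
    simp only [hC, Finset.mem_filter, Finset.mem_sdiff, Finset.mem_Icc]
    constructor
    · rintro ⟨⟨⟨h1, h2⟩, h3⟩, h4⟩
      exact ⟨⟨h1, h4⟩, fun hc => h3 hc.1⟩
    · rintro ⟨⟨h1, h4⟩, h3⟩
      exact ⟨⟨⟨h1, le_trans h4 hj2⟩, fun hxS => h3 ⟨hxS, h4⟩⟩, h4⟩
  have hcard4 : (i : ℕ) + 1 ≤ (C.filter (fun x => x ≤ j)).card := by
    rw [hfC, Finset.card_sdiff_of_subset hsub, Nat.card_Icc]
    omega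
  -- a i ≤ j
  have hle : a i ≤ j := by
    by_contra hlt
    push_neg at hlt
    have hsub5 : C.filter (fun x => x ≤ j) ⊆ Finset.image a (Finset.Iio i) := by
      intro x hx
      obtain ⟨hx1, hx2⟩ := Finset.mem_filter.1 hx
      have hxr : x ∈ Set.range a := by
        rw [ha, Finset.range_orderEmbOfFin]
        exact hx1
      obtain ⟨l, rfl⟩ := hxr
      have : l < i := by
        have := lt_of_le_of_lt hx2 hlt
        exact (a.strictMono.lt_iff_lt).1 this
      exact Finset.mem_image.2 ⟨l, Finset.mem_Iio.2 this, rfl⟩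
    have := Finset.card_le_card hsub5
    have h6 : (Finset.image a (Finset.Iio i)).card = (i : ℕ) := by
      rw [Finset.card_image_of_injective _ a.injective, Fin.card_Iio]
    omega
  -- a i ≠ j
  have hne : a i ≠ j := by
    intro h
    have haiC : a i ∈ C := Finset.orderEmbOfFin_mem C (compl_card hS) i
    rw [hC] at haiC
    exact (Finset.mem_sdiff.1 haiC).2 (h ▸ hjS)
  omega

lemma toT_mem {n : ℕ} {S : Finset ℕ} (hS : S ∈ DY (2*n) n) : toT n S hS ∈ SYT n := by
  refine ⟨((Finset.Icc 1 (2*n) \ S).orderEmbOfFin (compl_card hS)).strictMono,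
    (S.orderEmbOfFin (DY_card hS)).strictMono, col_lt hS, ?_⟩
  show Set.range ((Finset.Icc 1 (2*n) \ S).orderEmbOfFin (compl_card hS))
      ∪ Set.range (S.orderEmbOfFin (DY_card hS)) = _
  rw [Finset.range_orderEmbOfFin, Finset.range_orderEmbOfFin, ← Finset.coe_union,
    Finset.sdiff_union_of_subset (DY_subset hS), Finset.coe_Icc]

lemma amaj_toT {n : ℕ} {S : Finset ℕ} (hS : S ∈ DY (2*n) n) :
    amaj (toT n S hS) = majS (2*n) S := by
  unfold amaj majS
  have himg : Finset.image (toT n S hS).2 Finset.univ = S := by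
    apply Finset.coe_injective
    rw [Finset.coe_image, Finset.coe_univ, Set.image_univ]
    show Set.range (S.orderEmbOfFin (DY_card hS)) = _
    rw [Finset.range_orderEmbOfFin]
  rw [himg]
  apply Finset.sum_congr
  · apply Finset.filter_congr
    intro x hx
    have hx1 : 1 ≤ x := (Finset.mem_Icc.1 (DY_subset hS hx)).1
    have hiff : (∃ j, (toT n S hS).1 j = x + 1) ↔ x + 1 ∈ Finset.Icc 1 (2*n) \ S := by
      rw [← Finset.mem_coe, ← Finset.range_orderEmbOfFin (Finset.Icc 1 (2*n) \ S) (compl_card hS)]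
      exact ⟨fun ⟨j, hj⟩ => ⟨j, hj⟩, fun ⟨j, hj⟩ => ⟨j, hj⟩⟩
    rw [hiff, Finset.mem_sdiff, Finset.mem_Icc]
    constructor
    · rintro ⟨⟨_, h2⟩, h3⟩
      exact ⟨h3, by omega⟩
    · rintro ⟨h3, h2⟩
      exact ⟨⟨by omega, by omega⟩, h3⟩
  · intro x _
    rfl

lemma syt_eq_toT {n : ℕ} {T : (Fin n → ℕ) × (Fin n → ℕ)} (hT : T ∈ SYT n) :
    ∃ (S : Finset ℕ) (hS : S ∈ DY (2*n) n), T = toT n S hS := by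
  obtain ⟨ha, hb, hcol, hun⟩ := hT
  set Sa := Finset.image T.1 Finset.univ with hSa
  set Sb := Finset.image T.2 Finset.univ with hSb
  have hca : Sa.card = n := by
    rw [hSa, Finset.card_image_of_injective _ ha.injective, Finset.card_univ, Fintype.card_fin]
  have hcb : Sb.card = n := by
    rw [hSb, Finset.card_image_of_injective _ hb.injective, Finset.card_univ, Fintype.card_fin]
  have hcoe_a : (Sa : Set ℕ) = Set.range T.1 := by
    rw [hSa, Finset.coe_image, Finset.coe_univ, Set.image_univ]
  have hcoe_b : (Sb : Set ℕ) = Set.range T.2 := by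
    rw [hSb, Finset.coe_image, Finset.coe_univ, Set.image_univ]
  have hunion : Sa ∪ Sb = Finset.Icc 1 (2*n) := by
    apply Finset.coe_injective
    rw [Finset.coe_union, hcoe_a, hcoe_b, hun, Finset.coe_Icc]
  have hdisj : Disjoint Sa Sb := by
    have h1 := Finset.card_union_add_card_inter Sa Sb
    rw [hunion, Nat.card_Icc, hca, hcb] at h1
    have h2 : (Sa ∩ Sb).card = 0 := by omega
    rw [Finset.card_eq_zero] at h2
    exact Finset.disjoint_iff_inter_eq_empty.2 h2
  have hSb_sub : Sb ⊆ Finset.Icc 1 (2*n) := by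
    rw [← hunion]; exact Finset.subset_union_right
  have hballot : Ballot (2*n) Sb := by
    intro j hj
    have h2b : Sb.filter (fun x => x ≤ j)
        = Finset.image T.2 (Finset.univ.filter (fun l => T.2 l ≤ j)) := by
      ext x
      simp only [hSb, Finset.mem_filter, Finset.mem_image, Finset.mem_univ, true_and]
      constructor
      · rintro ⟨⟨l, rfl⟩, hxj⟩
        exact ⟨l, hxj, rfl⟩
      · rintro ⟨l, hl, rfl⟩
        exact ⟨⟨l, rfl⟩, hl⟩
    have h2a : Finset.image T.1 (Finset.univ.filter (fun l => T.2 l ≤ j))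
        ⊆ Sa.filter (fun x => x ≤ j) := by
      intro x hx
      obtain ⟨l, hl, rfl⟩ := Finset.mem_image.1 hx
      have hlj := (Finset.mem_filter.1 hl).2
      exact Finset.mem_filter.2 ⟨Finset.mem_image.2 ⟨l, Finset.mem_univ l, rfl⟩,
        le_of_lt (lt_of_lt_of_le (hcol l) hlj)⟩
    have hble : (Sb.filter (fun x => x ≤ j)).card ≤ (Sa.filter (fun x => x ≤ j)).card := by
      rw [h2b]
      calc (Finset.image T.2 (Finset.univ.filter (fun l => T.2 l ≤ j))).card
          = (Finset.univ.filter (fun l => T.2 l ≤ j)).card :=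
            Finset.card_image_of_injective _ hb.injective
        _ = (Finset.image T.1 (Finset.univ.filter (fun l => T.2 l ≤ j))).card :=
            (Finset.card_image_of_injective _ ha.injective).symm
        _ ≤ _ := Finset.card_le_card h2a
    have hsum : (Sa.filter (fun x => x ≤ j)).card + (Sb.filter (fun x => x ≤ j)).card = j := by
      rw [← Finset.card_union_of_disjoint
        (hdisj.mono (Finset.filter_subset _ _) (Finset.filter_subset _ _)),
        ← Finset.filter_union, hunion]
      have hicc : (Finset.Icc 1 (2*n)).filter (fun x => x ≤ j) = Finset.Icc 1 j := by
        ext x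
        simp only [Finset.mem_filter, Finset.mem_Icc]
        omega
      rw [hicc, Nat.card_Icc]
      omega
    omega
  have hS : Sb ∈ DY (2*n) n := Finset.mem_filter.2 ⟨mem_W.2 ⟨hSb_sub, hcb⟩, hballot⟩
  refine ⟨Sb, hS, ?_⟩
  have hSa_eq : Sa = Finset.Icc 1 (2*n) \ Sb := by
    ext x
    simp only [Finset.mem_sdiff, ← hunion, Finset.mem_union]
    constructor
    · intro hx
      exact ⟨Or.inl hx, fun hxb => (Finset.disjoint_left.1 hdisj) hx hxb⟩
    · rintro ⟨hx | hx, hnb⟩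
      · exact hx
      · exact absurd hx hnb
  have e2 : T.2 = fun i => Sb.orderEmbOfFin (DY_card hS) i := by
    apply Finset.orderEmbOfFin_unique
    · intro x
      exact Finset.mem_image.2 ⟨x, Finset.mem_univ x, rfl⟩
    · exact hb
  have e1 : T.1 = fun i => (Finset.Icc 1 (2*n) \ Sb).orderEmbOfFin (compl_card hS) i := by
    apply Finset.orderEmbOfFin_unique
    · intro x
      rw [← hSa_eq]
      exact Finset.mem_image.2 ⟨x, Finset.mem_univ x, rfl⟩
    · exact ha
  exact Prod.ext e1 e2

lemma SYT_eq_image (n : ℕ) :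
    SYT n = ↑(((DY (2*n) n).attach).image (fun S => toT n S.1 S.2)) := by
  ext T
  simp only [Finset.coe_image, Set.mem_image, Finset.mem_coe, Finset.mem_attach]
  constructor
  · intro hT
    obtain ⟨S, hS, rfl⟩ := syt_eq_toT hT
    exact ⟨⟨S, hS⟩, by simp, rfl⟩
  · rintro ⟨⟨S, hS⟩, -, rfl⟩
    exact toT_mem hS

/-- [n+1]_q · Σ_{T ∈ SYT(2×n)} q^amaj(T) = [2n choose n]_q. -/
theorem c2qn (n : ℕ) (hn : 1 ≤ n) :
    qInt (n + 1) * ∑ᶠ T ∈ SYT n, (X : Polynomial ℤ) ^ amaj T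
      = qBinom (2 * n) n := by
  have hsum : ∑ᶠ T ∈ SYT n, (X : Polynomial ℤ) ^ amaj T = DG (2*n) n := by
    rw [SYT_eq_image n, finsum_mem_coe_finset, Finset.sum_image ?hinj]
    case hinj =>
      intro x hx y hy hxy
      have h2 := congrArg (fun T => Finset.image T.2 Finset.univ) hxy
      simp only at h2
      have himg : ∀ (S : Finset ℕ) (hS : S ∈ DY (2*n) n),
          Finset.image (toT n S hS).2 Finset.univ = S := by
        intro S hS
        apply Finset.coe_injective
        rw [Finset.coe_image, Finset.coe_univ, Set.image_univ]
        show Set.range (S.orderEmbOfFin (DY_card hS)) = _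
        rw [Finset.range_orderEmbOfFin]
      rw [himg x.1 x.2, himg y.1 y.2] at h2
      exact Subtype.ext h2
    rw [DG]
    rw [← Finset.sum_attach (DY (2*n) n) (fun S => (X : Polynomial ℤ) ^ majS (2*n) S)]
    apply Finset.sum_congr rfl
    intro S _
    rw [amaj_toT S.2]
  rw [hsum]
  obtain ⟨m, rfl⟩ : ∃ m, n = m + 1 := ⟨n - 1, by omega⟩
  have := main_sum m
  rw [show m + 1 + 1 = m + 2 from rfl]
  exact this
end

section
/- For every positive integer n and every integer k with 1 ≤ k ≤ n, there is a bijection between the set RInc_k(2×n) \ Inc_k(2×n) of row-increasing tableaux of shape 2×n with k repeated values that have at least one column with two identical entries, and the set Inc_{k−1}(2×n) of increasing tableaux of shape 2×n with k−1 repeated values; in particular |RInc_k(2×n) \ Inc_k(2×n)| = |Inc_{k−1}(2×n)|, and hence |RInc_k(2×n)| = |Inc_k(2×n)| + |Inc_{k−1}(2×n)|. -/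
/-- Row-increasing tableaux of shape 2×n with entry set `{1, …, 2n−k}`:
rows strictly increasing, columns weakly increasing. -/
def RInc (n k : ℕ) : Set ((Fin n → ℕ) × (Fin n → ℕ)) :=
  {T | StrictMono T.1 ∧ StrictMono T.2 ∧ (∀ i, T.1 i ≤ T.2 i) ∧
    Set.range T.1 ∪ Set.range T.2 = Set.Icc 1 (2 * n - k)}

/-- Increasing tableaux of shape 2×n with entry set `{1, …, 2n−k}`:
rows and columns strictly increasing. -/
def Inc (n k : ℕ) : Set ((Fin n → ℕ) × (Fin n → ℕ)) :=
  {T | StrictMono T.1 ∧ StrictMono T.2 ∧ (∀ i, T.1 i < T.2 i) ∧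
    Set.range T.1 ∪ Set.range T.2 = Set.Icc 1 (2 * n - k)}

noncomputable def I1 (n : ℕ) (T : (Fin n → ℕ) × (Fin n → ℕ)) : ℕ :=
  sInf {j | ∃ hj : j < n, T.1 ⟨j, hj⟩ = T.2 ⟨j, hj⟩}

noncomputable def I2 (n : ℕ) (S : (Fin n → ℕ) × (Fin n → ℕ)) : ℕ :=
  sSup {j | ∃ hj : j < n, j = 0 ∨ ∃ _h0 : 0 < j, S.2 ⟨j - 1, by omega⟩ < S.1 ⟨j, hj⟩}

noncomputable def phi (n m : ℕ) (T : (Fin n → ℕ) × (Fin n → ℕ)) :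
    (Fin n → ℕ) × (Fin n → ℕ) :=
  (T.1, fun j => if j.1 < I1 n T then T.2 j
    else if hj : j.1 + 1 < n then T.2 ⟨j.1 + 1, hj⟩ else m + 1)

noncomputable def psi (n : ℕ) (S : (Fin n → ℕ) × (Fin n → ℕ)) :
    (Fin n → ℕ) × (Fin n → ℕ) :=
  (S.1, fun j => if j.1 < I2 n S then S.2 j
    else if h2 : j.1 = I2 n S then S.1 ⟨I2 n S, h2 ▸ j.2⟩
    else S.2 ⟨j.1 - 1, lt_of_le_of_lt (Nat.sub_le _ _) j.2⟩)

theorem phi_snd_lt (n m : ℕ) (T : (Fin n → ℕ) × (Fin n → ℕ)) (j : Fin n)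
    (h : j.1 < I1 n T) : (phi n m T).2 j = T.2 j := by
  simp only [phi]; rw [if_pos h]

theorem phi_snd_mid (n m : ℕ) (T : (Fin n → ℕ) × (Fin n → ℕ)) (j : Fin n)
    (h : ¬ j.1 < I1 n T) (h2 : j.1 + 1 < n) : (phi n m T).2 j = T.2 ⟨j.1 + 1, h2⟩ := by
  simp only [phi]; rw [if_neg h, dif_pos h2]

theorem phi_snd_last (n m : ℕ) (T : (Fin n → ℕ) × (Fin n → ℕ)) (j : Fin n)
    (h : ¬ j.1 < I1 n T) (h2 : ¬ j.1 + 1 < n) : (phi n m T).2 j = m + 1 := by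
  simp only [phi]; rw [if_neg h, dif_neg h2]

theorem psi_snd_lt (n : ℕ) (S : (Fin n → ℕ) × (Fin n → ℕ)) (j : Fin n)
    (h : j.1 < I2 n S) : (psi n S).2 j = S.2 j := by
  simp only [psi]; rw [if_pos h]

theorem psi_snd_eq (n : ℕ) (S : (Fin n → ℕ) × (Fin n → ℕ)) (j : Fin n)
    (h : j.1 = I2 n S) : (psi n S).2 j = S.1 ⟨j.1, j.2⟩ := by
  simp only [psi]; rw [if_neg (by omega), dif_pos h]
  exact congrArg S.1 (Fin.ext (by dsimp only; omega))

theorem psi_snd_gt (n : ℕ) (S : (Fin n → ℕ) × (Fin n → ℕ)) (j : Fin n)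
    (h : I2 n S < j.1) :
    (psi n S).2 j = S.2 ⟨j.1 - 1, lt_of_le_of_lt (Nat.sub_le _ _) j.2⟩ := by
  simp only [psi]; rw [if_neg (by omega), dif_neg (by omega)]

theorem I1_eq (n : ℕ) (T : (Fin n → ℕ) × (Fin n → ℕ)) (i : ℕ) (hin : i < n)
    (heq : T.1 ⟨i, hin⟩ = T.2 ⟨i, hin⟩)
    (hlb : ∀ j (hj : j < n), T.1 ⟨j, hj⟩ = T.2 ⟨j, hj⟩ → i ≤ j) : I1 n T = i := by
  refine le_antisymm (Nat.sInf_le ⟨hin, heq⟩) (le_csInf ⟨i, hin, heq⟩ ?_)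
  rintro j ⟨hj, hje⟩
  exact hlb j hj hje

theorem I2_eq (n : ℕ) (S : (Fin n → ℕ) × (Fin n → ℕ)) (i : ℕ) (hin : i < n)
    (hmem : i = 0 ∨ ∃ _h0 : 0 < i, S.2 ⟨i - 1, by omega⟩ < S.1 ⟨i, hin⟩)
    (hub : ∀ j (hj : j < n), 0 < j → S.2 ⟨j - 1, by omega⟩ < S.1 ⟨j, hj⟩ → j ≤ i) :
    I2 n S = i := by
  refine le_antisymm (csSup_le ⟨i, hin, hmem⟩ ?_)
    (le_csSup ⟨n, fun j hj => by obtain ⟨h, -⟩ := hj; omega⟩ ⟨hin, hmem⟩)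
  rintro j ⟨hj, rfl | ⟨h0, hje⟩⟩
  · exact Nat.zero_le i
  · exact hub j hj h0 hje

theorem rinc_finite (n k : ℕ) : (RInc n k).Finite := by
  set m := 2 * n - k
  have hfin : ((Set.univ.pi fun _ : Fin n => Set.Icc 1 m) ×ˢ
      (Set.univ.pi fun _ : Fin n => Set.Icc 1 m)).Finite :=
    (Set.Finite.pi fun _ => Set.finite_Icc 1 m).prod (Set.Finite.pi fun _ => Set.finite_Icc 1 m)
  refine hfin.subset ?_
  rintro ⟨a, b⟩ ⟨-, -, -, hr⟩
  constructor
  · intro j _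
    have : a j ∈ Set.range a ∪ Set.range b := Or.inl ⟨j, rfl⟩
    rw [hr] at this; exact this
  · intro j _
    have : b j ∈ Set.range a ∪ Set.range b := Or.inr ⟨j, rfl⟩
    rw [hr] at this; exact this

theorem phi_mem (n k : ℕ) (hn : 1 ≤ n) (hk1 : 1 ≤ k) (hk : k ≤ n)
    (T : (Fin n → ℕ) × (Fin n → ℕ)) (hT : T ∈ RInc n k \ Inc n k) :
    phi n (2 * n - k) T ∈ Inc n (k - 1) := by
  obtain ⟨a, b⟩ := T
  obtain ⟨⟨ha, hb, hab, hr⟩, hnot⟩ := hT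
  set m := 2 * n - k with hm
  have hkk : 2 * n - (k - 1) = m + 1 := by omega
  have hbd : ∀ x, x ∈ Set.range a ∪ Set.range b → 1 ≤ x ∧ x ≤ m := by
    intro x hx; rw [hr] at hx; exact hx
  have haub : ∀ j, a j ≤ m := fun j => (hbd _ (Or.inl ⟨j, rfl⟩)).2
  have halb : ∀ j, 1 ≤ a j := fun j => (hbd _ (Or.inl ⟨j, rfl⟩)).1
  have hbub : ∀ j, b j ≤ m := fun j => (hbd _ (Or.inr ⟨j, rfl⟩)).2
  have hblb : ∀ j, 1 ≤ b j := fun j => (hbd _ (Or.inr ⟨j, rfl⟩)).1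
  have hstr : ¬ ∀ j, a j < b j := fun hs => hnot ⟨ha, hb, hs, hr⟩
  push_neg at hstr
  obtain ⟨j0, hj0⟩ := hstr
  have hexist : {j | ∃ hj : j < n, a ⟨j, hj⟩ = b ⟨j, hj⟩}.Nonempty :=
    ⟨j0.1, ⟨j0.2, by simp only [Fin.eta]; exact le_antisymm (hab j0) hj0⟩⟩
  set i := I1 n (a, b) with hi
  have hiS : ∃ hj : i < n, a ⟨i, hj⟩ = b ⟨i, hj⟩ := Nat.sInf_mem hexist
  obtain ⟨hin, hieq⟩ := hiS
  have hmin : ∀ j (hj : j < n), j < i → a ⟨j, hj⟩ ≠ b ⟨j, hj⟩ := by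
    intro j hj hlt heq
    exact Nat.notMem_of_lt_sInf hlt ⟨hj, heq⟩
  have hphi : phi n m (a, b) = (a, fun j : Fin n => if j.1 < i then b j
      else if hj : j.1 + 1 < n then b ⟨j.1 + 1, hj⟩ else m + 1) := by
    rw [hi]; rfl
  rw [hphi]
  refine ⟨ha, ?_, ?_, ?_⟩
  · -- StrictMono of second row
    intro x y hxy
    have hxy' : x.1 < y.1 := hxy
    have hx2 := x.2
    have hy2 := y.2
    dsimp only
    split_ifs with h1 h2 h3 h4 h5 h6 h7
    all_goals try exact hb hxy
    all_goals try exact hb (Fin.lt_def.mpr (by dsimp only; omega))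
    all_goals try exact lt_of_le_of_lt (hbub _) (Nat.lt_succ_self m)
    all_goals omega
  · -- strict columns
    intro j
    dsimp only
    split_ifs with h1 h3
    · refine lt_of_le_of_ne (hab j) ?_
      intro heq
      exact hmin j.1 j.2 h1 (by simp only [Fin.eta]; exact heq)
    · exact lt_of_le_of_lt (hab j) (hb (Fin.lt_def.mpr (by dsimp only; omega)))
    · exact lt_of_le_of_lt (haub j) (Nat.lt_succ_self m)
  · -- range
    rw [hkk]
    ext x
    simp only [Set.mem_union, Set.mem_range, Set.mem_Icc]
    constructor
    · rintro (⟨j, rfl⟩ | ⟨j, rfl⟩)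
      · exact ⟨halb j, le_trans (haub j) (by omega)⟩
      · split_ifs with h1 h3
        · exact ⟨hblb j, le_trans (hbub j) (by omega)⟩
        · exact ⟨hblb _, le_trans (hbub _) (by omega)⟩
        · omega
    · intro hx
      by_cases hxm : x = m + 1
      · right
        refine ⟨⟨n - 1, by omega⟩, ?_⟩
        dsimp only
        rw [if_neg (by omega), dif_neg (by omega)]
        omega
      · have hx' : x ∈ Set.Icc 1 m := Set.mem_Icc.mpr ⟨hx.1, by omega⟩
        rw [← hr] at hx'
        rcases hx' with ⟨j, rfl⟩ | ⟨j, rfl⟩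
        · exact Or.inl ⟨j, rfl⟩
        · rcases lt_trichotomy j.1 i with hji | hji | hji
          · right
            exact ⟨j, by dsimp only; rw [if_pos hji]⟩
          · left
            refine ⟨⟨i, hin⟩, ?_⟩
            rw [hieq]
            exact congrArg b (Fin.ext hji.symm)
          · right
            refine ⟨⟨j.1 - 1, by omega⟩, ?_⟩
            dsimp only
            rw [if_neg (by omega), dif_pos (by omega : j.1 - 1 + 1 < n)]
            exact congrArg b (Fin.ext (by dsimp only; omega))

theorem psi_mem (n k : ℕ) (hn : 1 ≤ n) (hk1 : 1 ≤ k) (hk : k ≤ n)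
    (S : (Fin n → ℕ) × (Fin n → ℕ)) (hS : S ∈ Inc n (k - 1)) :
    psi n S ∈ RInc n k \ Inc n k := by
  obtain ⟨a, c⟩ := S
  obtain ⟨ha, hc, hlt, hr⟩ := hS
  dsimp only at ha hc hlt hr
  set m := 2 * n - k with hm
  have hkk : 2 * n - (k - 1) = m + 1 := by omega
  rw [hkk] at hr
  have hbd : ∀ x, x ∈ Set.range a ∪ Set.range c → 1 ≤ x ∧ x ≤ m + 1 := by
    intro x hx; rw [hr] at hx; exact hx
  have haub : ∀ j, a j ≤ m + 1 := fun j => (hbd _ (Or.inl ⟨j, rfl⟩)).2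
  have halb : ∀ j, 1 ≤ a j := fun j => (hbd _ (Or.inl ⟨j, rfl⟩)).1
  have hcub : ∀ j, c j ≤ m + 1 := fun j => (hbd _ (Or.inr ⟨j, rfl⟩)).2
  have hclb : ∀ j, 1 ≤ c j := fun j => (hbd _ (Or.inr ⟨j, rfl⟩)).1
  -- last entry of row 2 is m + 1
  have hclast : c ⟨n - 1, by omega⟩ = m + 1 := by
    have hmem : m + 1 ∈ Set.Icc 1 (m + 1) := Set.mem_Icc.mpr ⟨by omega, le_refl _⟩
    rw [← hr] at hmem
    rcases hmem with ⟨j, hj⟩ | ⟨j, hj⟩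
    · exfalso; have := hlt j; have := hcub j; omega
    · have : c j ≤ c ⟨n - 1, by omega⟩ :=
        hc.monotone (Fin.le_def.mpr (by dsimp only; omega))
      have := hcub ⟨n - 1, by omega⟩
      omega
  set Q : Set ℕ :=
    {j | ∃ hj : j < n, j = 0 ∨ ∃ _h0 : 0 < j, c ⟨j - 1, by omega⟩ < a ⟨j, hj⟩} with hQdef
  have hQ0 : 0 ∈ Q := ⟨by omega, Or.inl rfl⟩
  have hQbdd : BddAbove Q := ⟨n, fun j hj => by obtain ⟨h, -⟩ := hj; omega⟩
  set i := I2 n (a, c) with hi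
  have hQi : i = sSup Q := by rw [hi]; rfl
  have hiQ : i ∈ Q := by rw [hQi]; exact Nat.sSup_mem ⟨0, hQ0⟩ hQbdd
  obtain ⟨hin, hiP⟩ := hiQ
  have hcia : 0 < i → c ⟨i - 1, by omega⟩ < a ⟨i, hin⟩ := by
    intro h0
    rcases hiP with h | ⟨h0', hlt'⟩
    · omega
    · exact hlt'
  have hgt : ∀ j : Fin n, i < j.1 →
      a j ≤ c ⟨j.1 - 1, lt_of_le_of_lt (Nat.sub_le _ _) j.2⟩ := by
    intro j hij
    by_contra hcon
    push_neg at hcon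
    have hmem : j.1 ∈ Q := ⟨j.2, Or.inr ⟨by omega, hcon⟩⟩
    have hle := le_csSup hQbdd hmem
    rw [← hQi] at hle
    omega
  have hpsi : psi n (a, c) = (a, fun j : Fin n => if j.1 < i then c j
      else if h2 : j.1 = i then a ⟨i, h2 ▸ j.2⟩
      else c ⟨j.1 - 1, lt_of_le_of_lt (Nat.sub_le _ _) j.2⟩) := by
    rw [hi]; rfl
  rw [hpsi]
  constructor
  · refine ⟨ha, ?_, ?_, ?_⟩
    · -- strict mono of row 2
      intro x y hxy
      have hxy' : x.1 < y.1 := hxy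
      have hx2 := x.2
      have hy2 := y.2
      dsimp only
      split_ifs with h1 h2 h3 h4 h5 h6 h7 h8
      all_goals try (exfalso; omega)
      all_goals try exact hc hxy
      all_goals try exact hc (Fin.lt_def.mpr (by dsimp only; omega))
      all_goals try exact lt_of_lt_of_le (hlt ⟨i, hin⟩) (hc.monotone (Fin.le_def.mpr (by dsimp only; omega)))
      all_goals exact lt_of_le_of_lt (hc.monotone (Fin.le_def.mpr (by dsimp only; omega))) (hcia (by omega))
    · -- columns weakly increasing
      intro j
      dsimp only
      split_ifs with h1 h2
      · exact (hlt j).le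
      · exact le_of_eq (congrArg a (Fin.ext h2))
      · exact hgt j (by omega)
    · -- range
      ext x
      simp only [Set.mem_union, Set.mem_range, Set.mem_Icc]
      constructor
      · rintro (⟨j, rfl⟩ | ⟨j, rfl⟩)
        · refine ⟨halb j, ?_⟩
          have := hlt j; have := hcub j; omega
        · split_ifs with h1 h2
          · refine ⟨hclb j, ?_⟩
            have : c j < c ⟨n - 1, by omega⟩ := hc (Fin.lt_def.mpr (by dsimp only; omega))
            omega
          · refine ⟨halb _, ?_⟩
            have := hlt ⟨i, hin⟩; have := hcub ⟨i, hin⟩; omega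
          · refine ⟨hclb _, ?_⟩
            have hj1 : 0 < j.1 := by omega
            have : c ⟨j.1 - 1, lt_of_le_of_lt (Nat.sub_le _ _) j.2⟩ < c ⟨n - 1, by omega⟩ :=
              hc (Fin.lt_def.mpr (by dsimp only; omega))
            omega
      · intro hx
        have hx' : x ∈ Set.Icc 1 (m + 1) := Set.mem_Icc.mpr ⟨hx.1, by omega⟩
        rw [← hr] at hx'
        rcases hx' with ⟨j, rfl⟩ | ⟨j, rfl⟩
        · exact Or.inl ⟨j, rfl⟩
        · -- x = c j with c j ≤ m, so j ≠ n - 1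
          have hjlt : j.1 < n - 1 := by
            by_contra h
            have hj : j = (⟨n - 1, by omega⟩ : Fin n) := Fin.ext (by dsimp only; omega)
            rw [hj, hclast] at hx
            omega
          right
          by_cases h1 : j.1 < i
          · exact ⟨j, by rw [if_pos h1]⟩
          · refine ⟨⟨j.1 + 1, by omega⟩, ?_⟩
            dsimp only
            rw [if_neg (by omega), dif_neg (by omega)]
            exact congrArg c (Fin.ext (by dsimp only; omega))
  · -- not in Inc
    intro hmem
    obtain ⟨-, -, hstrict, -⟩ := hmem
    have hbi := hstrict ⟨i, hin⟩
    dsimp only at hbi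
    rw [if_neg (lt_irrefl i), dif_pos rfl] at hbi
    exact lt_irrefl _ hbi

theorem psi_phi (n k : ℕ) (hn : 1 ≤ n) (hk1 : 1 ≤ k) (hk : k ≤ n)
    (T : (Fin n → ℕ) × (Fin n → ℕ)) (hT : T ∈ RInc n k \ Inc n k) :
    psi n (phi n (2 * n - k) T) = T := by
  obtain ⟨a, b⟩ := T
  obtain ⟨⟨ha, hb, hab, hr⟩, hnot⟩ := hT
  dsimp only at ha hb hab hr
  set m := 2 * n - k with hm
  have hstr : ¬ ∀ j, a j < b j := fun hs => hnot ⟨ha, hb, hs, hr⟩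
  push_neg at hstr
  obtain ⟨j0, hj0⟩ := hstr
  have hexist : {j | ∃ hj : j < n, a ⟨j, hj⟩ = b ⟨j, hj⟩}.Nonempty :=
    ⟨j0.1, ⟨j0.2, by simp only [Fin.eta]; exact le_antisymm (hab j0) hj0⟩⟩
  set i := I1 n (a, b) with hi
  have hiS : ∃ hj : i < n, a ⟨i, hj⟩ = b ⟨i, hj⟩ := Nat.sInf_mem hexist
  obtain ⟨hin, hieq⟩ := hiS
  have hmin : ∀ j (hj : j < n), j < i → a ⟨j, hj⟩ ≠ b ⟨j, hj⟩ := by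
    intro j hj hlt heq
    exact Nat.notMem_of_lt_sInf hlt ⟨hj, heq⟩
  have hI2 : I2 n (phi n m (a, b)) = i := by
    apply I2_eq n (phi n m (a, b)) i hin
    · by_cases h0 : i = 0
      · exact Or.inl h0
      · refine Or.inr ⟨by omega, ?_⟩
        rw [phi_snd_lt n m (a, b) ⟨i - 1, by omega⟩ (show i - 1 < I1 n (a, b) by omega)]
        show b ⟨i - 1, _⟩ < a ⟨i, hin⟩
        rw [hieq]
        exact hb (Fin.lt_def.mpr (by dsimp only; omega))
    · intro j hj h0 hje
      by_contra hcon
      push_neg at hcon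
      have heq2 : (phi n m (a, b)).2 ⟨j - 1, by omega⟩ = b ⟨j, hj⟩ := by
        rw [phi_snd_mid n m (a, b) ⟨j - 1, by omega⟩
          (show ¬ (j - 1 < I1 n (a, b)) by rw [← hi]; omega)
          (show j - 1 + 1 < n by omega)]
        exact congrArg b (Fin.ext (by dsimp only; omega))
      rw [heq2] at hje
      have := hab ⟨j, hj⟩
      have hp : (phi n m (a, b)).1 ⟨j, hj⟩ = a ⟨j, hj⟩ := rfl
      omega
  refine Prod.ext rfl ?_
  show (psi n (phi n m (a, b))).2 = b
  funext j
  rcases lt_trichotomy j.1 i with hj | hj | hj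
  · rw [psi_snd_lt n _ j (by rw [hI2]; exact hj), phi_snd_lt n m (a, b) j (by rw [← hi]; exact hj)]
  · rw [psi_snd_eq n _ j (by rw [hI2]; exact hj)]
    show a ⟨j.1, j.2⟩ = b j
    have : j = (⟨i, hin⟩ : Fin n) := Fin.ext hj
    rw [this]
    exact hieq
  · rw [psi_snd_gt n _ j (by rw [hI2]; exact hj),
      phi_snd_mid n m (a, b) ⟨j.1 - 1, by omega⟩ (show ¬ (j.1 - 1 < I1 n (a, b)) by rw [← hi]; omega)
        (show j.1 - 1 + 1 < n by omega)]
    exact congrArg b (Fin.ext (by dsimp only; omega))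

theorem phi_psi (n k : ℕ) (hn : 1 ≤ n) (hk1 : 1 ≤ k) (hk : k ≤ n)
    (S : (Fin n → ℕ) × (Fin n → ℕ)) (hS : S ∈ Inc n (k - 1)) :
    phi n (2 * n - k) (psi n S) = S := by
  obtain ⟨a, c⟩ := S
  obtain ⟨ha, hc, hlt, hr⟩ := hS
  dsimp only at ha hc hlt hr
  set m := 2 * n - k with hm
  have hkk : 2 * n - (k - 1) = m + 1 := by omega
  rw [hkk] at hr
  have hbd : ∀ x, x ∈ Set.range a ∪ Set.range c → 1 ≤ x ∧ x ≤ m + 1 := by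
    intro x hx; rw [hr] at hx; exact hx
  have hcub : ∀ j, c j ≤ m + 1 := fun j => (hbd _ (Or.inr ⟨j, rfl⟩)).2
  have hclast : c ⟨n - 1, by omega⟩ = m + 1 := by
    have hmem : m + 1 ∈ Set.Icc 1 (m + 1) := Set.mem_Icc.mpr ⟨by omega, le_refl _⟩
    rw [← hr] at hmem
    rcases hmem with ⟨j, hj⟩ | ⟨j, hj⟩
    · exfalso; have := hlt j; have := hcub j; omega
    · have : c j ≤ c ⟨n - 1, by omega⟩ :=
        hc.monotone (Fin.le_def.mpr (by dsimp only; omega))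
      have := hcub ⟨n - 1, by omega⟩
      omega
  set Q : Set ℕ :=
    {j | ∃ hj : j < n, j = 0 ∨ ∃ _h0 : 0 < j, c ⟨j - 1, by omega⟩ < a ⟨j, hj⟩} with hQdef
  have hQ0 : 0 ∈ Q := ⟨by omega, Or.inl rfl⟩
  have hQbdd : BddAbove Q := ⟨n, fun j hj => by obtain ⟨h, -⟩ := hj; omega⟩
  set i := I2 n (a, c) with hi
  have hQi : i = sSup Q := by rw [hi]; rfl
  have hiQ : i ∈ Q := by rw [hQi]; exact Nat.sSup_mem ⟨0, hQ0⟩ hQbdd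
  obtain ⟨hin, hiP⟩ := hiQ
  have hI1 : I1 n (psi n (a, c)) = i := by
    apply I1_eq n (psi n (a, c)) i hin
    · show a ⟨i, hin⟩ = _
      rw [psi_snd_eq n (a, c) ⟨i, hin⟩ hi]
    · intro j hj hje
      by_contra hcon
      push_neg at hcon
      rw [psi_snd_lt n (a, c) ⟨j, hj⟩ (by dsimp only; omega)] at hje
      exact absurd hje (ne_of_lt (hlt ⟨j, hj⟩))
  refine Prod.ext rfl ?_
  show (phi n m (psi n (a, c))).2 = c
  funext j
  by_cases hj : j.1 < i
  · rw [phi_snd_lt n m _ j (by rw [hI1]; exact hj), psi_snd_lt n (a, c) j (by rw [← hi]; exact hj)]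
  · by_cases hj2 : j.1 + 1 < n
    · rw [phi_snd_mid n m _ j (by rw [hI1]; exact hj) hj2,
        psi_snd_gt n (a, c) ⟨j.1 + 1, hj2⟩ (by dsimp only; omega)]
      exact congrArg c (Fin.ext (by dsimp only; omega))
    · rw [phi_snd_last n m _ j (by rw [hI1]; exact hj) hj2]
      have hj3 := j.2
      have : j = (⟨n - 1, by omega⟩ : Fin n) := Fin.ext (show j.1 = n - 1 by omega)
      rw [this, hclast]

/-- There is a bijection between RInc_k(2×n) \ Inc_k(2×n) and Inc_{k−1}(2×n);
in particular the two sets have equal cardinality, and hence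
|RInc_k(2×n)| = |Inc_k(2×n)| + |Inc_{k−1}(2×n)|. -/
theorem rinc_minus_inc_bij (n k : ℕ) (hn : 1 ≤ n) (hk1 : 1 ≤ k) (hk : k ≤ n) :
    Nonempty ((RInc n k \ Inc n k : Set ((Fin n → ℕ) × (Fin n → ℕ)))
        ≃ (Inc n (k - 1) : Set ((Fin n → ℕ) × (Fin n → ℕ)))) ∧
    (RInc n k \ Inc n k).ncard = (Inc n (k - 1)).ncard ∧
    (RInc n k).ncard = (Inc n k).ncard + (Inc n (k - 1)).ncard := by
  have e : (RInc n k \ Inc n k : Set ((Fin n → ℕ) × (Fin n → ℕ)))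
      ≃ (Inc n (k - 1) : Set ((Fin n → ℕ) × (Fin n → ℕ))) :=
    { toFun := fun T => ⟨phi n (2 * n - k) T.1, phi_mem n k hn hk1 hk T.1 T.2⟩
      invFun := fun S => ⟨psi n S.1, psi_mem n k hn hk1 hk S.1 S.2⟩
      left_inv := fun T => Subtype.ext (psi_phi n k hn hk1 hk T.1 T.2)
      right_inv := fun S => Subtype.ext (phi_psi n k hn hk1 hk S.1 S.2) }
  have hcard : (RInc n k \ Inc n k).ncard = (Inc n (k - 1)).ncard := by
    rw [← Nat.card_coe_set_eq, ← Nat.card_coe_set_eq]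
    exact Nat.card_congr e
  refine ⟨⟨e⟩, hcard, ?_⟩
  have hsub : Inc n k ⊆ RInc n k := by
    intro T hT
    exact ⟨hT.1, hT.2.1, fun i => (hT.2.2.1 i).le, hT.2.2.2⟩
  have hfin : (RInc n k).Finite := rinc_finite n k
  have h1 := Set.ncard_diff hsub (hfin.subset hsub)
  have h2 := Set.ncard_le_ncard hsub hfin
  omega
end

section
/- For all integers n ≥ 1 and 1 ≤ k ≤ n, the binomial coefficient identity (n+1) · C(2n−k, k) · C(2n−2k, n−k) = (n−k+1) · ( C(n−1, k) · C(2n−k, n) + C(n−1, k−1) · C(2n−k+1, n) ) holds; equivalently, the refined large Schröder number r(n,k) = C(2n−k,k)·C(2n−2k,n−k)/(n−k+1) equals the sum s(n,k) + s(n,k−1) of refined small Schröder numbers, where s(n,j) = C(n−1,j)·C(2n−j,n)/(n+1). -/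
/-- (n+1) · C(2n−k, k) · C(2n−2k, n−k)
      = (n−k+1) · ( C(n−1, k) · C(2n−k, n) + C(n−1, k−1) · C(2n−k+1, n) ),
i.e. the refined large Schröder number r(n,k) equals s(n,k) + s(n,k−1). -/
theorem recur_rnk (n k : ℕ) (hn : 1 ≤ n) (hk1 : 1 ≤ k) (hk : k ≤ n) :
    (n + 1) * (Nat.choose (2 * n - k) k * Nat.choose (2 * n - 2 * k) (n - k))
      = (n - k + 1) * (Nat.choose (n - 1) k * Nat.choose (2 * n - k) n
          + Nat.choose (n - 1) (k - 1) * Nat.choose (2 * n - k + 1) n) := by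
  obtain ⟨j, rfl⟩ : ∃ j, k = j + 1 := ⟨k - 1, by omega⟩
  obtain ⟨m, rfl⟩ : ∃ m, n = m + (j + 1) := ⟨n - (j + 1), by omega⟩
  rw [show 2 * (m + (j + 1)) - (j + 1) = 2 * m + j + 1 by omega,
      show 2 * (m + (j + 1)) - 2 * (j + 1) = 2 * m by omega,
      show m + (j + 1) - (j + 1) = m by omega,
      show m + (j + 1) - 1 = m + j by omega,
      show j + 1 - 1 = j by omega,
      show m + (j + 1) + 1 = m + j + 2 by omega,
      show 2 * m + j + 1 + 1 = 2 * m + j + 2 by omega]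
  rcases m with _ | p
  · simp [Nat.choose_eq_zero_of_lt, Nat.choose_succ_self_right]
  · rw [show 2 * (p + 1) + j + 1 = 2 * p + j + 3 by ring,
        show 2 * (p + 1) + j + 2 = 2 * p + j + 4 by ring,
        show 2 * (p + 1) = 2 * p + 2 by ring,
        show p + 1 + j = p + j + 1 by ring,
        show p + 1 + (j + 1) = p + j + 2 by ring,
        show p + j + 1 + 2 = p + j + 3 by ring,
        show p + 1 + 1 = p + 2 by ring]
    have h1 : j + 1 ≤ 2 * p + j + 3 := by omega
    have h2 : p + 1 ≤ 2 * p + 2 := by omega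
    have h3 : j + 1 ≤ p + j + 1 := by omega
    have h4 : p + j + 2 ≤ 2 * p + j + 3 := by omega
    have h5 : j ≤ p + j + 1 := by omega
    have h6 : p + j + 2 ≤ 2 * p + j + 4 := by omega
    have := @Nat.cast_injective ℚ _ _
    apply this
    push_cast
    rw [Nat.cast_choose ℚ h1, Nat.cast_choose ℚ h2, Nat.cast_choose ℚ h3,
        Nat.cast_choose ℚ h4, Nat.cast_choose ℚ h5, Nat.cast_choose ℚ h6,
        show 2 * p + j + 3 - (j + 1) = 2 * p + 2 by omega,
        show 2 * p + 2 - (p + 1) = p + 1 by omega,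
        show p + j + 1 - (j + 1) = p by omega,
        show 2 * p + j + 3 - (p + j + 2) = p + 1 by omega,
        show p + j + 1 - j = p + 1 by omega,
        show 2 * p + j + 4 - (p + j + 2) = p + 2 by omega,
        show 2 * p + j + 4 = (2 * p + j + 3) + 1 by omega,
        show p + 2 = (p + 1) + 1 by omega,
        show p + j + 2 = (p + j + 1) + 1 by omega]
    rw [Nat.factorial_succ (2 * p + j + 3), Nat.factorial_succ (p + 1),
        Nat.factorial_succ (p + j + 1), Nat.factorial_succ j, Nat.factorial_succ p]
    have f1 : ((2 * p + j + 3).factorial : ℚ) ≠ 0 := by positivity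
    have f2 : ((2 * p + 2).factorial : ℚ) ≠ 0 := by positivity
    have f3 : ((p + j + 1).factorial : ℚ) ≠ 0 := by positivity
    have f4 : (p.factorial : ℚ) ≠ 0 := by positivity
    have f5 : (j.factorial : ℚ) ≠ 0 := by positivity
    push_cast
    field_simp
    ring
end

section
/- For every positive integer n and every integer k with 0 ≤ k ≤ n, there exists a bijection Φ from RInc_k(2×n) to itself such that for every T ∈ RInc_k(2×n): (1) the second row of Φ(T) is identical to the second row of T, and (2) maj(Φ(T)) = amaj(T) + n − k. -/
/-- Major index: sum of all `i` such that `i` appears in row 1 and `i+1` appears in row 2. -/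
def maj {n : ℕ} (T : (Fin n → ℕ) × (Fin n → ℕ)) : ℕ :=
  ∑ i ∈ (Finset.image T.1 Finset.univ).filter (fun i => ∃ j, T.2 j = i + 1), i

open Finset

namespace RIncAux

/-- number of elements of `F` that are `≤ m` -/
def cnt (F : Finset ℕ) (m : ℕ) : ℕ := (F.filter (· ≤ m)).card

lemma cnt_succ (F : Finset ℕ) (m : ℕ) :
    cnt F (m + 1) = cnt F m + (if m + 1 ∈ F then 1 else 0) := by
  classical
  unfold cnt
  have h : F.filter (· ≤ m + 1) = F.filter (· ≤ m) ∪ F.filter (· = m + 1) := by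
    ext x; simp only [mem_filter, mem_union]
    constructor
    · rintro ⟨hx, hle⟩
      rcases Nat.lt_or_ge x (m+1) with h' | h'
      · exact Or.inl ⟨hx, by omega⟩
      · exact Or.inr ⟨hx, by omega⟩
    · rintro (⟨hx, hle⟩ | ⟨hx, rfl⟩) <;> exact ⟨by assumption, by omega⟩
  rw [h, card_union_of_disjoint, filter_eq']
  · split_ifs <;> simp
  · rw [Finset.disjoint_filter]
    intro x _ hle heq; omega

lemma cnt_zero {F : Finset ℕ} (h0 : 0 ∉ F) : cnt F 0 = 0 := by
  unfold cnt
  rw [Finset.card_eq_zero, Finset.filter_eq_empty_iff]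
  intro x hx hle
  exact h0 (by simpa [Nat.le_zero.mp hle] using hx)

lemma cnt_le_card (F : Finset ℕ) (m : ℕ) : cnt F m ≤ F.card :=
  Finset.card_le_card (filter_subset _ _)

lemma cnt_eq_card {F : Finset ℕ} {N : ℕ} (h : F ⊆ Icc 1 N) (m : ℕ) (hm : N ≤ m) :
    cnt F m = F.card := by
  unfold cnt
  rw [Finset.filter_true_of_mem]
  intro x hx
  have := h hx
  simp only [mem_Icc] at this
  omega

lemma cnt_union {F G : Finset ℕ} (h : Disjoint F G) (m : ℕ) :
    cnt (F ∪ G) m = cnt F m + cnt G m := by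
  unfold cnt
  rw [filter_union, card_union_of_disjoint (disjoint_filter_filter h)]

/-- enumeration vs counting -/
lemma le_iff_lt_cnt {n : ℕ} {f : Fin n → ℕ} (hf : StrictMono f) (i : Fin n) (m : ℕ) :
    f i ≤ m ↔ (i : ℕ) < cnt (Finset.image f Finset.univ) m := by
  classical
  have hc : cnt (Finset.image f Finset.univ) m
      = (Finset.univ.filter (fun j => f j ≤ m)).card := by
    unfold cnt
    rw [Finset.filter_image]
    exact Finset.card_image_of_injective _ hf.injective
  rw [hc]
  constructor
  · intro h
    have hsub : Finset.Iic i ⊆ Finset.univ.filter (fun j => f j ≤ m) := by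
      intro j hj
      simp only [Finset.mem_Iic] at hj
      simp only [Finset.mem_filter, Finset.mem_univ, true_and]
      exact le_trans (hf.monotone hj) h
    have := Finset.card_le_card hsub
    rwa [Fin.card_Iic] at this
  · intro h
    by_contra hcon
    push_neg at hcon
    have hsub : Finset.univ.filter (fun j => f j ≤ m) ⊆ Finset.Iio i := by
      intro j hj
      simp only [Finset.mem_filter] at hj
      simp only [Finset.mem_Iio]
      exact hf.lt_iff_lt.mp (lt_of_le_of_lt hj.2 hcon)
    have := Finset.card_le_card hsub
    rw [Fin.card_Iio] at this
    omega

lemma cnt_le_of_pointwise {n : ℕ} {a b : Fin n → ℕ} (ha : StrictMono a) (hb : StrictMono b)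
    (hab : ∀ i, a i ≤ b i) (m : ℕ) :
    cnt (Finset.image b Finset.univ) m ≤ cnt (Finset.image a Finset.univ) m := by
  classical
  set t := cnt (Finset.image b Finset.univ) m with ht
  rcases Nat.eq_zero_or_pos t with h0 | hpos
  · omega
  have htn : t ≤ n := by
    have := cnt_le_card (Finset.image b Finset.univ) m
    have hcard : (Finset.image b Finset.univ).card = n := by
      rw [Finset.card_image_of_injective _ hb.injective, Finset.card_univ, Fintype.card_fin]
    omega
  set i : Fin n := ⟨t - 1, by omega⟩ with hi
  have hbi : b i ≤ m := (le_iff_lt_cnt hb i m).mpr (by simp [hi]; omega)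
  have hai : a i ≤ m := le_trans (hab i) hbi
  have := (le_iff_lt_cnt ha i m).mp hai
  simp only [hi] at this
  omega

lemma pointwise_le_of_cnt {n : ℕ} {a b : Fin n → ℕ} (ha : StrictMono a) (hb : StrictMono b)
    (h : ∀ m, cnt (Finset.image b Finset.univ) m ≤ cnt (Finset.image a Finset.univ) m)
    (i : Fin n) : a i ≤ b i := by
  have h1 : (i : ℕ) < cnt (Finset.image b Finset.univ) (b i) :=
    (le_iff_lt_cnt hb i (b i)).mp le_rfl
  exact (le_iff_lt_cnt ha i (b i)).mpr (lt_of_lt_of_le h1 (h (b i)))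





/-- start of the block of consecutive elements of `B` containing `i` -/
noncomputable def bs (B : Finset ℕ) (i : ℕ) : ℕ := sInf {r | ∀ j, r ≤ j → j ≤ i → j ∈ B}

/-- end of the block of consecutive elements of `B` containing `i` -/
noncomputable def be (B : Finset ℕ) (i : ℕ) : ℕ := sInf {e | i ≤ e ∧ e + 1 ∉ B}

section bs
variable {B : Finset ℕ} {i : ℕ}

lemma bs_nonempty (hi : i ∈ B) : {r | ∀ j, r ≤ j → j ≤ i → j ∈ B}.Nonempty :=
  ⟨i, fun j h1 h2 => by have : j = i := le_antisymm h2 h1; rwa [this]⟩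

lemma bs_le (hi : i ∈ B) : bs B i ≤ i :=
  Nat.sInf_le (fun j h1 h2 => by have : j = i := le_antisymm h2 h1; rwa [this])

lemma bs_subset (hi : i ∈ B) : ∀ j, bs B i ≤ j → j ≤ i → j ∈ B :=
  Nat.sInf_mem (bs_nonempty hi)

lemma bs_mem (hi : i ∈ B) : bs B i ∈ B := bs_subset hi _ le_rfl (bs_le hi)

lemma bs_pos (hi : i ∈ B) (h0 : 0 ∉ B) : 1 ≤ bs B i := by
  by_contra h
  push_neg at h
  interval_cases h' : bs B i
  · exact h0 (by have := bs_mem hi; rwa [h'] at this)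

lemma bs_pred_notMem (hi : i ∈ B) (h0 : 0 ∉ B) : bs B i - 1 ∉ B := by
  have hpos := bs_pos hi h0
  have hlt : bs B i - 1 < bs B i := by omega
  have hnot := Nat.notMem_of_lt_sInf (s := {r | ∀ j, r ≤ j → j ≤ i → j ∈ B}) hlt
  simp only [Set.mem_setOf_eq, not_forall] at hnot
  obtain ⟨j, h1, h2, h3⟩ := hnot
  have : j = bs B i - 1 := by
    by_contra hne
    exact h3 (bs_subset hi j (by omega) h2)
  rwa [this] at h3

lemma bs_succ_eq (hi : i ∈ B) (hi1 : i + 1 ∈ B) : bs B (i + 1) = bs B i := by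
  unfold bs
  congr 1
  ext r
  simp only [Set.mem_setOf_eq]
  constructor
  · intro h j h1 h2; exact h j h1 (by omega)
  · intro h j h1 h2
    rcases Nat.lt_or_ge j (i+1) with h' | h'
    · exact h j h1 (by omega)
    · have : j = i + 1 := by omega
      rwa [this]

lemma bs_eq_self (hi : i ∈ B) (h : i - 1 ∉ B) (h0 : 0 ∉ B) : bs B i = i := by
  refine le_antisymm (bs_le hi) ?_
  by_contra hlt
  push_neg at hlt
  have hi1 : 1 ≤ i := by by_contra h'; push_neg at h'; interval_cases i; exact h0 hi
  exact h (bs_subset hi (i-1) (by omega) (by omega))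

end bs

section be
variable {B : Finset ℕ} {i : ℕ}

lemma be_nonempty : {e | i ≤ e ∧ e + 1 ∉ B}.Nonempty := by
  refine ⟨max i (B.sup id), le_max_left _ _, fun h => ?_⟩
  have := Finset.le_sup (f := id) h
  simp only [id] at this
  omega

lemma be_spec : i ≤ be B i ∧ be B i + 1 ∉ B := Nat.sInf_mem be_nonempty

lemma be_subset (hi : i ∈ B) : ∀ j, i ≤ j → j ≤ be B i → j ∈ B := by
  intro j h1 h2
  rcases Nat.eq_or_lt_of_le h1 with rfl | hlt
  · exact hi
  by_contra hj
  have hmem : j - 1 ∈ {e | i ≤ e ∧ e + 1 ∉ B} := ⟨by omega, by simpa [Nat.sub_add_cancel (by omega : 1 ≤ j)] using hj⟩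
  have := Nat.sInf_le hmem
  change be B i ≤ j - 1 at this
  omega

lemma be_mem (hi : i ∈ B) : be B i ∈ B := be_subset hi _ be_spec.1 le_rfl

lemma bs_be (hi : i ∈ B) (h : i - 1 ∉ B) (h0 : 0 ∉ B) : bs B (be B i) = i := by
  refine le_antisymm (Nat.sInf_le ?_) ?_
  · intro j h1 h2
    exact be_subset hi j h1 h2
  · by_contra hlt
    push_neg at hlt
    have hi1 : 1 ≤ i := by by_contra h'; push_neg at h'; interval_cases i; exact h0 hi
    have : i - 1 ∈ B := bs_subset (be_mem hi) (i-1) (by omega) (by have := be_spec (B := B) (i := i); omega)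
    exact h this

end be



section rot

/-- left rotation of `S` within each block of consecutive elements of `B` -/
noncomputable def rotL (B S : Finset ℕ) : Finset ℕ :=
  B.filter (fun i => (i + 1 ∈ B ∧ i + 1 ∈ S) ∨ (i + 1 ∉ B ∧ bs B i ∈ S))

/-- right rotation of `S` within each block of consecutive elements of `B` -/
noncomputable def rotR (B S : Finset ℕ) : Finset ℕ :=
  B.filter (fun i => (i - 1 ∈ B ∧ i - 1 ∈ S) ∨ (i - 1 ∉ B ∧ be B i ∈ S))

variable {N : ℕ} {B S : Finset ℕ}

lemma rotL_subset : rotL B S ⊆ B := filter_subset _ _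

lemma mem_rotL {i : ℕ} :
    i ∈ rotL B S ↔ i ∈ B ∧ ((i + 1 ∈ B ∧ i + 1 ∈ S) ∨ (i + 1 ∉ B ∧ bs B i ∈ S)) := by
  simp [rotL]

/-- the key counting invariant for the rotation -/
lemma cnt_rotL (hB : B ⊆ Icc 1 N) (hS : S ⊆ B) (m : ℕ) :
    cnt (rotL B S) m + (if m ∈ B ∧ m + 1 ∈ B ∧ bs B m ∈ S then 1 else 0)
      = cnt S m + (if m ∈ B ∧ m + 1 ∈ B ∧ m + 1 ∈ S then 1 else 0) := by
  classical
  have h0 : 0 ∉ B := fun h => by simpa using hB h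
  induction m with
  | zero =>
      rw [cnt_zero (fun h => h0 (rotL_subset h)), cnt_zero (fun h => h0 (hS h))]
      simp [h0]
  | succ m IH =>
      rw [cnt_succ, cnt_succ]
      by_cases hb1 : m + 1 ∈ B
      · by_cases hb2 : m + 2 ∈ B
        · by_cases hbm : m ∈ B
          · have hbs : bs B (m + 1) = bs B m := bs_succ_eq hbm hb1
            simp only [mem_rotL, hb1, hb2, hbs, hbm, true_and, not_true_eq_false,
              false_and, or_false] at IH ⊢
            split_ifs at IH ⊢ <;> omega
          · have hbs : bs B (m + 1) = m + 1 :=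
              bs_eq_self hb1 (by simpa using hbm) h0
            simp only [mem_rotL, hb1, hb2, hbs, hbm, true_and, not_true_eq_false,
              false_and, or_false, if_false] at IH ⊢
            split_ifs at IH ⊢ <;> omega
        · by_cases hbm : m ∈ B
          · have hbs : bs B (m + 1) = bs B m := bs_succ_eq hbm hb1
            simp only [mem_rotL, hb1, hb2, hbs, hbm, true_and, not_false_eq_true,
              not_true_eq_false, false_and, false_or, true_and, and_false, if_false] at IH ⊢
            split_ifs at IH ⊢ <;> omega
          · have hbs : bs B (m + 1) = m + 1 :=
              bs_eq_self hb1 (by simpa using hbm) h0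
            simp only [mem_rotL, hb1, hb2, hbs, hbm, true_and, not_false_eq_true,
              not_true_eq_false, false_and, false_or, and_false, if_false] at IH ⊢
            split_ifs at IH ⊢ <;> omega
      · have hs1 : m + 1 ∉ S := fun h => hb1 (hS h)
        have hr1 : m + 1 ∉ rotL B S := fun h => hb1 (rotL_subset h)
        simp only [hb1, hs1, hr1, false_and, and_false, if_false, add_zero] at IH ⊢
        omega

end rot

section valid
variable {N : ℕ} {A B : Finset ℕ}

lemma A_eq_union (hU : A ∪ B = Icc 1 N) :
    A = (Icc 1 N \ B) ∪ (A ∩ B) := by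
  ext x
  simp only [mem_union, mem_sdiff, mem_inter]
  constructor
  · intro hx
    by_cases hxB : x ∈ B
    · exact Or.inr ⟨hx, hxB⟩
    · exact Or.inl ⟨by rw [← hU]; exact mem_union_left _ hx, hxB⟩
  · rintro (⟨hx, hxB⟩ | ⟨hx, _⟩)
    · rw [← hU] at hx
      rcases mem_union.mp hx with h | h
      · exact h
      · exact absurd h hxB
    · exact hx

lemma disj_sdiff {X : Finset ℕ} (hX : X ⊆ B) : Disjoint (Icc 1 N \ B) X := by
  rw [Finset.disjoint_left]
  intro x hx hxX
  exact (mem_sdiff.mp hx).2 (hX hxX)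

lemma card_rotL (hB : B ⊆ Icc 1 N) (hNB : N ∈ B) :
    (rotL B (A ∩ B)).card = (A ∩ B).card := by
  have hS : A ∩ B ⊆ B := inter_subset_right
  have h := cnt_rotL (hB := hB) (hS := hS) N
  have hN1 : N + 1 ∉ B := fun h' => by simpa using hB h'
  simp only [hN1, false_and, and_false, if_false, add_zero] at h
  rwa [cnt_eq_card (Finset.Subset.trans rotL_subset hB) N le_rfl,
    cnt_eq_card (Finset.Subset.trans hS hB) N le_rfl] at h

lemma cnt_valid (hB : B ⊆ Icc 1 N) (hU : A ∪ B = Icc 1 N)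
    (hcnt : ∀ m, cnt B m ≤ cnt A m) (m : ℕ) :
    cnt B m ≤ cnt ((Icc 1 N \ B) ∪ rotL B (A ∩ B)) m := by
  classical
  have hS : A ∩ B ⊆ B := inter_subset_right
  have hinv := cnt_rotL (hB := hB) (hS := hS) m
  have hApm : cnt ((Icc 1 N \ B) ∪ rotL B (A ∩ B)) m
      = cnt (Icc 1 N \ B) m + cnt (rotL B (A ∩ B)) m :=
    cnt_union (disj_sdiff rotL_subset) m
  have hAm : cnt A m = cnt (Icc 1 N \ B) m + cnt (A ∩ B) m := by
    rw [← cnt_union (disj_sdiff inter_subset_right), ← A_eq_union hU]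
  have hAm1 : cnt A (m+1) = cnt A m + (if m + 1 ∈ A then 1 else 0) := cnt_succ A m
  have hBm1 : cnt B (m+1) = cnt B m + (if m + 1 ∈ B then 1 else 0) := cnt_succ B m
  by_cases hb1 : m + 1 ∈ B
  · by_cases hbm : m ∈ B
    · by_cases hs1 : m + 1 ∈ A ∩ B
      · simp only [hbm, hb1, hs1, true_and, if_true] at hinv
        have h2 := hcnt m
        split_ifs at hinv <;> omega
      · have hmA : m + 1 ∉ A := fun h => hs1 (mem_inter.mpr ⟨h, hb1⟩)
        simp only [hbm, hb1, hs1, hmA, true_and, and_false, if_false, if_true, add_zero] at hinv hAm1 hBm1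
        have h2 := hcnt (m + 1)
        split_ifs at hinv <;> omega
    · simp only [hbm, false_and, if_false, add_zero] at hinv
      have h2 := hcnt m
      omega
  · simp only [hb1, false_and, and_false, if_false, add_zero] at hinv
    have h2 := hcnt m
    omega

lemma rotR_rotL (hB : B ⊆ Icc 1 N) {S : Finset ℕ} (hS : S ⊆ B) :
    rotR B (rotL B S) = S := by
  have h0 : 0 ∉ B := fun h => by simpa using hB h
  ext i
  by_cases hi : i ∈ B
  · have hi1 : 1 ≤ i := by
      have := hB hi; simp only [mem_Icc] at this; omega
    simp only [rotR, mem_filter, hi, true_and]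
    by_cases hpred : i - 1 ∈ B
    · have hmem : i - 1 ∈ rotL B S ↔ i ∈ S := by
        rw [mem_rotL]
        have : i - 1 + 1 = i := by omega
        rw [this]
        simp [hpred, hi]
      simp only [hpred, true_and, not_true_eq_false, false_and, or_false]
      rw [hmem]
    · have he1 : be B i ∈ B := be_mem hi
      have he2 : be B i + 1 ∉ B := (be_spec (B := B) (i := i)).2
      have he3 : bs B (be B i) = i := bs_be hi hpred h0
      have hmem : be B i ∈ rotL B S ↔ i ∈ S := by
        rw [mem_rotL, he3]
        simp [he1, he2]
      simp only [hpred, false_and, not_false_eq_true, true_and, false_or]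
      rw [hmem]
  · constructor
    · intro h; exact absurd (filter_subset _ _ h) hi
    · intro h; exact absurd (hS h) hi

end valid

section sums
variable {N : ℕ} {A B : Finset ℕ}

lemma tele (c : ℕ → ℤ) (N : ℕ) :
    ∑ i ∈ Icc 1 N, (i : ℤ) * (c i - c (i + 1))
      = (∑ i ∈ Icc 1 N, c i) - N * c (N + 1) := by
  induction N with
  | zero => simp
  | succ M IH =>
      rw [Finset.sum_Icc_succ_top (by omega), Finset.sum_Icc_succ_top (by omega), IH]
      push_cast
      ring

lemma shift_sum (hB : B ⊆ Icc 1 N) (hU : A ∪ B = Icc 1 N) (hNB : N ∈ B) :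
    ∑ i ∈ Icc 1 N, (if i ∈ Icc 1 N \ B ∧ i + 1 ∈ B then (i : ℤ) else 0)
      = (∑ i ∈ Icc 1 N, if i ∈ B ∧ i + 1 ∈ Icc 1 N \ B then (i : ℤ) else 0)
        + (Icc 1 N \ B).card := by
  classical
  set C : Finset ℕ := Icc 1 N \ B with hC
  set c : ℕ → ℤ := fun i => if i ∈ C then 1 else 0 with hc
  have key : ∀ i ∈ Icc 1 N,
      (if i ∈ C ∧ i + 1 ∈ B then (i : ℤ) else 0)
        - (if i ∈ B ∧ i + 1 ∈ C then (i : ℤ) else 0)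
      = (i : ℤ) * (c i - c (i + 1)) := by
    intro i hi
    have hiB : i ∈ B ↔ i ∉ C := by
      simp only [hC, mem_sdiff, hi, true_and, not_not]
    have hi1 : i + 1 ∈ B → i + 1 ∉ C := by
      intro h
      simp only [hC, mem_sdiff]
      rintro ⟨-, h2⟩; exact h2 h
    by_cases h1 : i ∈ C
    · have hiB' : i ∉ B := fun h => (hiB.mp h) h1
      by_cases h2 : i + 1 ∈ B
      · simp only [hc, h1, h2, hi1 h2, if_true, if_false, hiB', true_and, false_and, if_false]
        ring
      · -- i ∈ C, i+1 ∉ B: then i < N (since N ∈ B) so i+1 ∈ C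
        have hiN : i ≠ N := fun h => hiB' (h ▸ hNB)
        have hmem : i + 1 ∈ Icc 1 N := by
          simp only [mem_Icc] at hi ⊢; omega
        have h3 : i + 1 ∈ C := by
          simp only [hC, mem_sdiff]; exact ⟨hmem, h2⟩
        simp only [hc, h1, h2, h3, hiB', if_true, false_and, and_false, if_false]
        ring
    · have hiB' : i ∈ B := hiB.mpr h1
      simp only [hc, h1, hiB', if_false, true_and, false_and, if_false, true_and]
      by_cases h3 : i + 1 ∈ C
      · simp only [h3, if_true]; ring
      · simp only [h3, if_false]; ring
  have hsum := Finset.sum_congr rfl key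
  rw [Finset.sum_sub_distrib] at hsum
  rw [tele c N] at hsum
  have hcN : c (N + 1) = 0 := by
    have : N + 1 ∉ C := by
      simp only [hC, mem_sdiff, mem_Icc]
      rintro ⟨⟨-, h⟩, -⟩; omega
    simp [hc, this]
  have hcard : (∑ i ∈ Icc 1 N, c i) = (C.card : ℤ) := by
    simp only [hc]
    rw [Finset.sum_ite_mem]
    have : Icc 1 N ∩ C = C := by
      rw [Finset.inter_eq_right]
      exact sdiff_subset
    rw [this]
    simp
  rw [hcN, hcard] at hsum
  push_cast at hsum ⊢
  omega

end sums

section keysum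
variable {N : ℕ} {A B : Finset ℕ}

lemma key_sum (hB : B ⊆ Icc 1 N) (hU : A ∪ B = Icc 1 N) (hNB : N ∈ B) :
    ∑ i ∈ Icc 1 N, (if i ∈ (Icc 1 N \ B) ∪ rotL B (A ∩ B) ∧ i + 1 ∈ B then (i : ℤ) else 0)
      = (∑ i ∈ Icc 1 N, if i ∈ B ∧ i + 1 ∈ A then (i : ℤ) else 0)
        + (Icc 1 N \ B).card := by
  classical
  have hAsub : A ⊆ Icc 1 N := by
    rw [← hU]; exact subset_union_left
  have split1 : ∀ i ∈ Icc 1 N,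
      (if i ∈ (Icc 1 N \ B) ∪ rotL B (A ∩ B) ∧ i + 1 ∈ B then (i : ℤ) else 0)
        = (if i ∈ B ∧ i + 1 ∈ A ∩ B then (i : ℤ) else 0)
          + (if i ∈ Icc 1 N \ B ∧ i + 1 ∈ B then (i : ℤ) else 0) := by
    intro i _
    by_cases h2 : i + 1 ∈ B
    · by_cases hC : i ∈ Icc 1 N \ B
      · have hiB : i ∉ B := (mem_sdiff.mp hC).2
        have hAp : i ∈ (Icc 1 N \ B) ∪ rotL B (A ∩ B) := mem_union_left _ hC
        simp [h2, hC, hAp, hiB]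
      · have hmem : i ∈ (Icc 1 N \ B) ∪ rotL B (A ∩ B) ↔ (i ∈ B ∧ i + 1 ∈ A ∩ B) := by
          simp only [mem_union, hC, false_or, mem_rotL, h2, not_true_eq_false, false_and,
            or_false, true_and]
        simp only [h2, and_true, hC, false_and, if_false, add_zero]
        by_cases hx : i ∈ (Icc 1 N \ B) ∪ rotL B (A ∩ B)
        · rw [if_pos hx, if_pos (hmem.mp hx)]
        · rw [if_neg hx, if_neg (fun h => hx (hmem.mpr h))]
    · have h2' : i + 1 ∉ A ∩ B := fun h => h2 (mem_inter.mp h).2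
      simp [h2, h2']
  have split2 : ∀ i ∈ Icc 1 N,
      (if i ∈ B ∧ i + 1 ∈ A then (i : ℤ) else 0)
        = (if i ∈ B ∧ i + 1 ∈ A ∩ B then (i : ℤ) else 0)
          + (if i ∈ B ∧ i + 1 ∈ Icc 1 N \ B then (i : ℤ) else 0) := by
    intro i _
    by_cases h1 : i ∈ B
    · by_cases h2 : i + 1 ∈ A
      · by_cases h3 : i + 1 ∈ B
        · have : i + 1 ∉ Icc 1 N \ B := fun h => (mem_sdiff.mp h).2 h3
          simp [h1, h2, h3, this, mem_inter]
        · have : i + 1 ∈ Icc 1 N \ B := mem_sdiff.mpr ⟨hAsub h2, h3⟩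
          have h4 : i + 1 ∉ A ∩ B := fun h => h3 (mem_inter.mp h).2
          simp [h1, h2, this, h4]
      · have h4 : i + 1 ∉ A ∩ B := fun h => h2 (mem_inter.mp h).1
        have h5 : i + 1 ∉ Icc 1 N \ B := by
          intro h
          rcases mem_sdiff.mp h with ⟨hIcc, hnb⟩
          rw [← hU] at hIcc
          rcases mem_union.mp hIcc with h' | h'
          · exact h2 h'
          · exact hnb h'
        simp [h1, h2, h4, h5]
    · simp [h1]
  rw [Finset.sum_congr rfl split1, Finset.sum_congr rfl split2,
    Finset.sum_add_distrib, Finset.sum_add_distrib, shift_sum hB hU hNB]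
  ring

end keysum

section assemble

variable {n k : ℕ}

def Bof (T : (Fin n → ℕ) × (Fin n → ℕ)) : Finset ℕ := Finset.image T.2 Finset.univ
def Aof (T : (Fin n → ℕ) × (Fin n → ℕ)) : Finset ℕ := Finset.image T.1 Finset.univ

noncomputable def Apof (N : ℕ) (T : (Fin n → ℕ) × (Fin n → ℕ)) : Finset ℕ :=
  (Icc 1 N \ Bof T) ∪ rotL (Bof T) (Aof T ∩ Bof T)

variable {T : (Fin n → ℕ) × (Fin n → ℕ)}

lemma hU' (hT : T ∈ RInc n k) : Aof T ∪ Bof T = Icc 1 (2 * n - k) := by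
  apply Finset.coe_injective
  rw [Finset.coe_union]
  unfold Aof Bof
  rw [Finset.coe_image, Finset.coe_image, Finset.coe_univ, Set.image_univ, Set.image_univ,
    Finset.coe_Icc]
  exact hT.2.2.2

lemma hBsub (hT : T ∈ RInc n k) : Bof T ⊆ Icc 1 (2 * n - k) := by
  rw [← hU' hT]; exact subset_union_right

lemma hAsub' (hT : T ∈ RInc n k) : Aof T ⊆ Icc 1 (2 * n - k) := by
  rw [← hU' hT]; exact subset_union_left

lemma cardA (hT : T ∈ RInc n k) : (Aof T).card = n := by
  unfold Aof
  rw [Finset.card_image_of_injective _ hT.1.injective, Finset.card_univ, Fintype.card_fin]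

lemma cardB (hT : T ∈ RInc n k) : (Bof T).card = n := by
  unfold Bof
  rw [Finset.card_image_of_injective _ hT.2.1.injective, Finset.card_univ, Fintype.card_fin]

lemma hNmem (hn : 1 ≤ n) (hk : k ≤ n) (hT : T ∈ RInc n k) : 2 * n - k ∈ Bof T := by
  set N := 2 * n - k with hN
  have hNIcc : N ∈ Icc 1 N := by simp only [mem_Icc]; omega
  rw [← hU' hT] at hNIcc
  rcases mem_union.mp hNIcc with h | h
  · unfold Aof at h
    obtain ⟨j, -, hj⟩ := Finset.mem_image.mp h
    have h1 : T.1 j ≤ T.2 j := hT.2.2.1 j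
    have h2 : T.2 j ∈ Bof T := Finset.mem_image.mpr ⟨j, Finset.mem_univ _, rfl⟩
    have h3 := hBsub hT h2
    simp only [mem_Icc] at h3
    have : T.2 j = N := by omega
    rwa [← this]
  · exact h

lemma hcnt' (hT : T ∈ RInc n k) : ∀ m, cnt (Bof T) m ≤ cnt (Aof T) m :=
  cnt_le_of_pointwise hT.1 hT.2.1 hT.2.2.1

lemma cardC (hT : T ∈ RInc n k) :
    (Icc 1 (2 * n - k) \ Bof T).card = 2 * n - k - n := by
  rw [Finset.card_sdiff_of_subset (hBsub hT), Nat.card_Icc, cardB hT]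
  omega

lemma cardS (hT : T ∈ RInc n k) : (Aof T ∩ Bof T).card = 2 * n - (2 * n - k) := by
  have h := Finset.card_union_add_card_inter (Aof T) (Bof T)
  rw [hU' hT, Nat.card_Icc, cardA hT, cardB hT] at h
  omega

lemma n_le_N (hT : T ∈ RInc n k) : n ≤ 2 * n - k := by
  have := Finset.card_le_card (hBsub hT)
  rwa [cardB hT, Nat.card_Icc, Nat.add_sub_cancel] at this

lemma cardAp (hn : 1 ≤ n) (hk : k ≤ n) (hT : T ∈ RInc n k) :
    (Apof (2 * n - k) T).card = n := by
  unfold Apof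
  rw [Finset.card_union_of_disjoint (disj_sdiff rotL_subset),
    card_rotL (hBsub hT) (hNmem hn hk hT), cardC hT, cardS hT]
  have h1 := n_le_N hT
  omega

lemma Ap_subset (hT : T ∈ RInc n k) : Apof (2 * n - k) T ⊆ Icc 1 (2 * n - k) := by
  unfold Apof
  apply Finset.union_subset sdiff_subset
  exact Finset.Subset.trans rotL_subset (hBsub hT)

lemma image_orderEmbOfFin {F : Finset ℕ} (h : F.card = n) :
    Finset.image (F.orderEmbOfFin h) Finset.univ = F := by
  apply Finset.coe_injective
  rw [Finset.coe_image, Finset.coe_univ, Set.image_univ]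
  exact F.range_orderEmbOfFin h

lemma phi_mem (hn : 1 ≤ n) (hk : k ≤ n) (hT : T ∈ RInc n k) :
    ((fun i => (Apof (2 * n - k) T).orderEmbOfFin (cardAp hn hk hT) i), T.2) ∈ RInc n k := by
  set N := 2 * n - k with hN
  set f : Fin n → ℕ := fun i => (Apof N T).orderEmbOfFin (cardAp hn hk hT) i with hf
  have hfsm : StrictMono f := ((Apof N T).orderEmbOfFin (cardAp hn hk hT)).strictMono
  have hfim : Finset.image f Finset.univ = Apof N T := image_orderEmbOfFin _
  refine ⟨hfsm, hT.2.1, ?_, ?_⟩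
  · apply pointwise_le_of_cnt hfsm hT.2.1
    intro m
    rw [hfim]
    exact cnt_valid (hBsub hT) (hU' hT) (hcnt' hT) m
  · have h1 : Set.range f = ↑(Apof N T) := (Apof N T).range_orderEmbOfFin _
    have h2 : Set.range T.2 = ↑(Bof T) := by
      unfold Bof
      rw [Finset.coe_image, Finset.coe_univ, Set.image_univ]
    rw [h1, h2, ← Finset.coe_union, ← Finset.coe_Icc]
    congr 1
    unfold Apof
    rw [Finset.union_assoc, Finset.union_eq_right.mpr rotL_subset,
      Finset.sdiff_union_of_subset (hBsub hT)]

lemma maj_eq_sum {N : ℕ} (P : (Fin n → ℕ) × (Fin n → ℕ))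
    (hsub : Finset.image P.1 Finset.univ ⊆ Icc 1 N) :
    (maj P : ℤ) = ∑ i ∈ Icc 1 N,
      (if i ∈ Finset.image P.1 Finset.univ ∧ i + 1 ∈ Finset.image P.2 Finset.univ
        then (i : ℤ) else 0) := by
  classical
  unfold maj
  rw [Nat.cast_sum]
  have h1 : (Finset.image P.1 Finset.univ).filter (fun i => ∃ j, P.2 j = i + 1)
      = (Finset.image P.1 Finset.univ).filter (fun i => i + 1 ∈ Finset.image P.2 Finset.univ) := by
    apply Finset.filter_congr
    intro i _
    simp [Finset.mem_image, eq_comm]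
  rw [h1, Finset.sum_filter]
  have h2 : ∑ i ∈ Finset.image P.1 Finset.univ,
      (if i + 1 ∈ Finset.image P.2 Finset.univ then (i : ℤ) else 0)
      = ∑ i ∈ Finset.image P.1 Finset.univ,
        (if i ∈ Finset.image P.1 Finset.univ ∧ i + 1 ∈ Finset.image P.2 Finset.univ
          then (i : ℤ) else 0) := by
    refine Finset.sum_congr rfl (fun i hi => ?_)
    simp only [hi, true_and]
  rw [h2]
  exact Finset.sum_subset hsub (fun x _ hx => by rw [if_neg (fun h => hx h.1)])

lemma amaj_eq_sum {N : ℕ} (P : (Fin n → ℕ) × (Fin n → ℕ))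
    (hsub : Finset.image P.2 Finset.univ ⊆ Icc 1 N) :
    (amaj P : ℤ) = ∑ i ∈ Icc 1 N,
      (if i ∈ Finset.image P.2 Finset.univ ∧ i + 1 ∈ Finset.image P.1 Finset.univ
        then (i : ℤ) else 0) := by
  classical
  unfold amaj
  rw [Nat.cast_sum]
  have h1 : (Finset.image P.2 Finset.univ).filter (fun i => ∃ j, P.1 j = i + 1)
      = (Finset.image P.2 Finset.univ).filter (fun i => i + 1 ∈ Finset.image P.1 Finset.univ) := by
    apply Finset.filter_congr
    intro i _
    simp [Finset.mem_image, eq_comm]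
  rw [h1, Finset.sum_filter]
  have h2 : ∑ i ∈ Finset.image P.2 Finset.univ,
      (if i + 1 ∈ Finset.image P.1 Finset.univ then (i : ℤ) else 0)
      = ∑ i ∈ Finset.image P.2 Finset.univ,
        (if i ∈ Finset.image P.2 Finset.univ ∧ i + 1 ∈ Finset.image P.1 Finset.univ
          then (i : ℤ) else 0) := by
    refine Finset.sum_congr rfl (fun i hi => ?_)
    simp only [hi, true_and]
  rw [h2]
  exact Finset.sum_subset hsub (fun x _ hx => by rw [if_neg (fun h => hx h.1)])

end assemble

section final
variable {n k : ℕ} {T : (Fin n → ℕ) × (Fin n → ℕ)}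

lemma phi_stat (hn : 1 ≤ n) (hk : k ≤ n) (hT : T ∈ RInc n k) :
    maj ((fun i => (Apof (2 * n - k) T).orderEmbOfFin (cardAp hn hk hT) i), T.2)
      = amaj T + (n - k) := by
  classical
  set N := 2 * n - k with hN
  set f : Fin n → ℕ := fun i => (Apof N T).orderEmbOfFin (cardAp hn hk hT) i with hf
  have hfim : Finset.image f Finset.univ = Apof N T := image_orderEmbOfFin _
  have hsub1 : Finset.image (f, T.2).1 Finset.univ ⊆ Icc 1 N := by
    dsimp only
    rw [hfim]; exact Ap_subset hT
  have h1 := maj_eq_sum (N := N) (f, T.2) hsub1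
  dsimp only at h1
  rw [hfim] at h1
  have h2 := key_sum (A := Aof T) (hBsub hT) (hU' hT) (hNmem hn hk hT)
  have h3 := amaj_eq_sum (N := N) T (hBsub hT)
  have hap : Apof N T = (Icc 1 N \ Bof T) ∪ rotL (Bof T) (Aof T ∩ Bof T) := rfl
  have hbof : Finset.image T.2 Finset.univ = Bof T := rfl
  have haof : Finset.image T.1 Finset.univ = Aof T := rfl
  rw [hbof] at h1
  rw [hbof, haof] at h3
  rw [hap, h2, ← h3] at h1
  have hcC : ((Icc 1 N \ Bof T).card : ℤ) = ((n - k : ℕ) : ℤ) := by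
    rw [cardC hT]
    congr 1
    omega
  rw [hcC] at h1
  exact_mod_cast h1

lemma Ap_inter (hT : T ∈ RInc n k) :
    Apof (2 * n - k) T ∩ Bof T = rotL (Bof T) (Aof T ∩ Bof T) := by
  unfold Apof
  rw [Finset.union_inter_distrib_right, Finset.sdiff_inter_self, Finset.empty_union,
    Finset.inter_eq_left.mpr rotL_subset]

lemma finite_RInc : (RInc n k).Finite := by
  have hF : (Set.univ.pi (fun _ : Fin n => Set.Icc 1 (2 * n - k))).Finite :=
    Set.Finite.pi (fun _ => Set.finite_Icc _ _)
  apply Set.Finite.subset (hF.prod hF)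
  rintro ⟨f, g⟩ hT
  have hU := hT.2.2.2
  constructor
  · intro i _
    have : f i ∈ Set.range f ∪ Set.range g := Or.inl ⟨i, rfl⟩
    rw [hU] at this
    exact this
  · intro i _
    have : g i ∈ Set.range f ∪ Set.range g := Or.inr ⟨i, rfl⟩
    rw [hU] at this
    exact this

end final

end RIncAux

open RIncAux

/-- There is a bijection Φ of RInc_k(2×n) onto itself preserving the second row,
with maj(Φ(T)) = amaj(T) + n − k for every T ∈ RInc_k(2×n). -/
theorem phi_bijection (n k : ℕ) (hn : 1 ≤ n) (hk : k ≤ n) :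
    ∃ Φ : ((Fin n → ℕ) × (Fin n → ℕ)) → ((Fin n → ℕ) × (Fin n → ℕ)),
      Set.BijOn Φ (RInc n k) (RInc n k) ∧
      ∀ T ∈ RInc n k, (Φ T).2 = T.2 ∧ maj (Φ T) = amaj T + (n - k) := by
  classical
  set Φ : ((Fin n → ℕ) × (Fin n → ℕ)) → ((Fin n → ℕ) × (Fin n → ℕ)) :=
    fun T => dite (T ∈ RInc n k)
      (fun h => ((fun i => (Apof (2 * n - k) T).orderEmbOfFin (cardAp hn hk h) i), T.2))
      (fun _ => T) with hΦ
  have hPhi_eq : ∀ T (hT : T ∈ RInc n k),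
      Φ T = ((fun i => (Apof (2 * n - k) T).orderEmbOfFin (cardAp hn hk hT) i), T.2) := by
    intro T hT
    simp only [hΦ]
    rw [dif_pos hT]
  have hmaps : Set.MapsTo Φ (RInc n k) (RInc n k) := by
    intro T hT
    rw [hPhi_eq T hT]
    exact phi_mem hn hk hT
  have hinj : Set.InjOn Φ (RInc n k) := by
    intro T hT T' hT' heq
    rw [hPhi_eq T hT, hPhi_eq T' hT'] at heq
    have h2 : T.2 = T'.2 := by
      have := congrArg Prod.snd heq
      simpa using this
    have hB : Bof T = Bof T' := by unfold Bof; rw [h2]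
    have h1 : (fun i => (Apof (2 * n - k) T).orderEmbOfFin (cardAp hn hk hT) i)
        = (fun i => (Apof (2 * n - k) T').orderEmbOfFin (cardAp hn hk hT') i) := by
      have := congrArg Prod.fst heq
      simpa using this
    have hApT : Finset.image
        (fun i => (Apof (2 * n - k) T).orderEmbOfFin (cardAp hn hk hT) i) Finset.univ
        = Apof (2 * n - k) T := image_orderEmbOfFin _
    have hAp : Apof (2 * n - k) T = Apof (2 * n - k) T' := by
      rw [← hApT, h1]
      exact image_orderEmbOfFin _
    have hrot : rotL (Bof T) (Aof T ∩ Bof T) = rotL (Bof T') (Aof T' ∩ Bof T') := by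
      rw [← Ap_inter hT, ← Ap_inter hT', hAp, hB]
    have hS : Aof T ∩ Bof T = Aof T' ∩ Bof T' := by
      have e := rotR_rotL (hBsub hT) (S := Aof T ∩ Bof T) Finset.inter_subset_right
      have e' := rotR_rotL (hBsub hT') (S := Aof T' ∩ Bof T') Finset.inter_subset_right
      calc Aof T ∩ Bof T = rotR (Bof T) (rotL (Bof T) (Aof T ∩ Bof T)) := e.symm
        _ = rotR (Bof T') (rotL (Bof T') (Aof T' ∩ Bof T')) := by rw [hrot, hB]
        _ = Aof T' ∩ Bof T' := e'
    have hA : Aof T = Aof T' := by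
      rw [A_eq_union (hU' hT), A_eq_union (hU' hT'), hS, hB]
    have e1 : T.1 = ⇑((Aof T).orderEmbOfFin (cardA hT)) :=
      Finset.orderEmbOfFin_unique (cardA hT)
        (fun x => Finset.mem_image.mpr ⟨x, Finset.mem_univ x, rfl⟩) hT.1
    have e2 : T'.1 = ⇑((Aof T).orderEmbOfFin (cardA hT)) :=
      Finset.orderEmbOfFin_unique (cardA hT)
        (fun x => by rw [hA]; exact Finset.mem_image.mpr ⟨x, Finset.mem_univ x, rfl⟩) hT'.1
    exact Prod.ext (e1.trans e2.symm) h2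
  refine ⟨Φ, (finite_RInc.injOn_iff_bijOn_of_mapsTo hmaps).mp hinj, ?_⟩
  intro T hT
  rw [hPhi_eq T hT]
  exact ⟨rfl, phi_stat hn hk hT⟩
end
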